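/- arXiv:0811.2664 — 5 statements merged into one kernel-verified Lean document; each statement's English description precedes it below -/
import Mathlib

section
/- Let H ∈ (0,1) and let ψ : ℝ → ℝ be continuous with support in [0,1] satisfying ∫ψ = 0. Then the quantity C_ψ(H) := -(1/2)∫₀¹∫₀¹ ψ(x)ψ(x')|x-x'|^{2H} dx dx' is nonnegative. -/
open MeasureTheory

open Set Real in
/-- `1 - cos x ≥ 0`. -/
private lemma aux_one_sub_cos_nonneg (x : ℝ) : 0 ≤ 1 - Real.cos x := by
  nlinarith [Real.cos_le_one x]

open Set Real in
private lemma aux_one_sub_cos_le_sq (x : ℝ) : 1 - Real.cos x ≤ x ^ 2 / 2 := by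
  have h1 := Real.sin_sq_le_sq (x := x / 2)
  have h2 : Real.cos (2 * (x / 2)) = 1 - 2 * Real.sin (x / 2) ^ 2 := by
    rw [Real.cos_two_mul, Real.cos_sq']; ring
  rw [show 2 * (x / 2) = x by ring] at h2
  nlinarith

/-- dominating function for the kernel -/
noncomputable def bnd (a u : ℝ) : ℝ := min (u ^ (1 - a) / 2) (2 / u ^ (1 + a))

open Set Real in
private lemma aux_bnd_nonneg {a u : ℝ} (hu : 0 < u) : 0 ≤ bnd a u := by
  have h1 : (0:ℝ) ≤ u ^ (1 - a) := (Real.rpow_pos_of_pos hu _).le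
  have h2 : (0:ℝ) < u ^ (1 + a) := Real.rpow_pos_of_pos hu _
  unfold bnd
  positivity

open Set Real in
private lemma aux_kernel_le_bnd {a : ℝ} (t u : ℝ) (ht : |t| ≤ 1) (hu : 0 < u) :
    (1 - Real.cos (t * u)) / u ^ (1 + a) ≤ bnd a u := by
  have hupos : (0:ℝ) < u ^ (1 + a) := Real.rpow_pos_of_pos hu _
  refine le_min ?_ ?_
  · have h2 : u ^ (1 - a) = u ^ (2:ℝ) / u ^ (1 + a) := by
      rw [show (1 - a) = 2 - (1 + a) by ring, Real.rpow_sub hu]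
    have h3 : u ^ (2:ℝ) = u ^ 2 := by
      rw [show (2:ℝ) = ((2:ℕ):ℝ) by norm_num, Real.rpow_natCast]
    have ht2 : t ^ 2 ≤ 1 := by nlinarith [sq_abs t, abs_nonneg t]
    have hnum : 1 - Real.cos (t * u) ≤ u ^ 2 / 2 := by
      have := aux_one_sub_cos_le_sq (t * u)
      nlinarith [sq_nonneg u]
    rw [h2, h3, show u ^ 2 / u ^ (1 + a) / 2 = (u ^ 2 / 2) / u ^ (1 + a) by ring]
    gcongr
  · have hnum : 1 - Real.cos (t * u) ≤ 2 := by nlinarith [Real.neg_one_le_cos (t * u)]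
    gcongr

open Set Real in
private lemma aux_bnd_measurable (a : ℝ) : Measurable (bnd a) :=
  ((measurable_id.pow measurable_const).div_const 2).min
    (measurable_const.div (measurable_id.pow measurable_const))

open Set Real in
private lemma aux_bnd_integrable {a : ℝ} (ha0 : 0 < a) (ha2 : a < 2) :
    IntegrableOn (bnd a) (Set.Ioi (0:ℝ)) := by
  have h1 : IntegrableOn (bnd a) (Set.Ioc (0:ℝ) 1) := by
    refine Integrable.mono' (g := fun u => u ^ (1 - a) / 2) ?_ ?_ ?_
    · have : IntervalIntegrable (fun u : ℝ => u ^ (1 - a)) volume 0 1 :=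
        intervalIntegral.intervalIntegrable_rpow' (by linarith)
      rw [intervalIntegrable_iff_integrableOn_Ioc_of_le zero_le_one] at this
      exact this.div_const 2
    · exact (aux_bnd_measurable a).aestronglyMeasurable
    · refine (ae_restrict_iff' measurableSet_Ioc).2 (Filter.Eventually.of_forall fun u hu => ?_)
      rw [Real.norm_eq_abs, abs_of_nonneg (aux_bnd_nonneg hu.1)]
      exact min_le_left _ _
  have h2 : IntegrableOn (bnd a) (Set.Ioi (1:ℝ)) := by
    refine Integrable.mono' (g := fun u => 2 * u ^ (-(1 + a))) ?_ ?_ ?_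
    · exact (integrableOn_Ioi_rpow_of_lt (by linarith) one_pos).const_mul 2
    · exact (aux_bnd_measurable a).aestronglyMeasurable
    · refine (ae_restrict_iff' measurableSet_Ioi).2 (Filter.Eventually.of_forall fun u hu => ?_)
      have hu0 : (0:ℝ) < u := lt_trans one_pos hu
      rw [Real.norm_eq_abs, abs_of_nonneg (aux_bnd_nonneg hu0)]
      refine (min_le_right _ _).trans (le_of_eq ?_)
      show 2 / u ^ (1 + a) = 2 * u ^ (-(1 + a))
      rw [Real.rpow_neg hu0.le, div_eq_mul_inv]
  have := h1.union h2
  rwa [Set.Ioc_union_Ioi_eq_Ioi zero_le_one] at this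

open Set Real in
private lemma aux_kernel_measurable (a : ℝ) :
    Measurable (fun u : ℝ => (1 - Real.cos u) / u ^ (1 + a)) :=
  (measurable_const.sub Real.measurable_cos).div (measurable_id.pow measurable_const)

open Set Real in
private lemma aux_kernel_integrable {a : ℝ} (ha0 : 0 < a) (ha2 : a < 2) :
    IntegrableOn (fun u : ℝ => (1 - Real.cos u) / u ^ (1 + a)) (Set.Ioi (0:ℝ)) := by
  refine Integrable.mono' (aux_bnd_integrable ha0 ha2)
    (aux_kernel_measurable a).aestronglyMeasurable ?_
  refine (ae_restrict_iff' measurableSet_Ioi).2 (Filter.Eventually.of_forall fun u hu => ?_)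
  have hu0 : (0:ℝ) < u := hu
  have hnn : 0 ≤ (1 - Real.cos u) / u ^ (1 + a) :=
    div_nonneg (aux_one_sub_cos_nonneg u) (Real.rpow_pos_of_pos hu0 _).le
  rw [Real.norm_eq_abs, abs_of_nonneg hnn]
  have := aux_kernel_le_bnd (a := a) 1 u (by norm_num) hu0
  rwa [one_mul] at this

open Set Real in
private lemma aux_kernel_scaling {a : ℝ} (ha0 : 0 < a) (t : ℝ) :
    ∫ u in Set.Ioi (0:ℝ), (1 - Real.cos (t * u)) / u ^ (1 + a)
      = |t| ^ a * ∫ u in Set.Ioi (0:ℝ), (1 - Real.cos u) / u ^ (1 + a) := by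
  rcases eq_or_ne t 0 with rfl | ht
  · simp [Real.zero_rpow ha0.ne']
  · set c : ℝ := |t| with hc
    have hc0 : 0 < c := abs_pos.2 ht
    have hcos : ∀ u : ℝ, Real.cos (t * u) = Real.cos (c * u) := by
      intro u
      rcases abs_cases t with ⟨h, _⟩ | ⟨h, _⟩
      · rw [hc, h]
      · rw [show c * u = -(t * u) by rw [hc, h]; ring, Real.cos_neg]
    have hpt : ∀ u ∈ Set.Ioi (0:ℝ), (1 - Real.cos (t * u)) / u ^ (1 + a)
        = c ^ (1 + a) * ((1 - Real.cos (c * u)) / (c * u) ^ (1 + a)) := by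
      intro u hu
      have hu0 : (0:ℝ) < u := hu
      rw [Real.mul_rpow hc0.le hu0.le, hcos u]
      have h1 : (0:ℝ) < c ^ (1 + a) := Real.rpow_pos_of_pos hc0 _
      field_simp
    rw [setIntegral_congr_fun measurableSet_Ioi hpt, integral_const_mul,
      MeasureTheory.integral_comp_mul_left_Ioi
        (fun v => (1 - Real.cos v) / v ^ (1 + a)) 0 hc0]
    rw [mul_zero, smul_eq_mul]
    rw [show c ^ (1 + a) * (c⁻¹ * ∫ u in Set.Ioi (0:ℝ), (1 - Real.cos u) / u ^ (1 + a))
        = (c ^ (1 + a) * c⁻¹) * ∫ u in Set.Ioi (0:ℝ), (1 - Real.cos u) / u ^ (1 + a) by ring]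
    congr 1
    rw [Real.rpow_add hc0, Real.rpow_one]
    field_simp

open Set Real in
private lemma aux_I_pos {a : ℝ} (ha0 : 0 < a) (ha2 : a < 2) :
    0 < ∫ u in Set.Ioi (0:ℝ), (1 - Real.cos u) / u ^ (1 + a) := by
  have hIint := aux_kernel_integrable ha0 ha2
  have hsub : Set.Ioc (π / 2) π ⊆ Set.Ioi (0:ℝ) := by
    intro u hu
    have := Real.pi_pos
    exact lt_trans (by linarith) hu.1
  have hlow : ∀ u ∈ Set.Ioc (π / 2) π, (64:ℝ)⁻¹ ≤ (1 - Real.cos u) / u ^ (1 + a) := by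
    intro u hu
    have hpi := Real.pi_pos
    have hu0 : (0:ℝ) < u := lt_trans (by linarith) hu.1
    have hcos : Real.cos u ≤ 0 :=
      Real.cos_nonpos_of_pi_div_two_le_of_le hu.1.le (by linarith [hu.2])
    have hub : u ^ (1 + a) ≤ 64 := by
      have hu4 : u ≤ 4 := le_trans hu.2 (by linarith [Real.pi_lt_d2])
      have h1 : u ^ (1 + a) ≤ (4:ℝ) ^ (1 + a) :=
        Real.rpow_le_rpow hu0.le hu4 (by linarith)
      have h2 : (4:ℝ) ^ (1 + a) ≤ (4:ℝ) ^ (3:ℝ) :=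
        Real.rpow_le_rpow_of_exponent_le (by norm_num) (by linarith)
      have h3 : (4:ℝ) ^ (3:ℝ) = 64 := by
        rw [show (3:ℝ) = ((3:ℕ):ℝ) by norm_num, Real.rpow_natCast]; norm_num
      linarith
    have hden : (0:ℝ) < u ^ (1 + a) := Real.rpow_pos_of_pos hu0 _
    rw [le_div_iff₀ hden]
    nlinarith
  have hpi := Real.pi_pos
  calc (0:ℝ) < (π - π / 2) * (64:ℝ)⁻¹ := by nlinarith
    _ = ∫ _ in Set.Ioc (π / 2) π, (64:ℝ)⁻¹ := by
        rw [setIntegral_const, Real.volume_real_Ioc, max_eq_left (by linarith),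
          smul_eq_mul]
    _ ≤ ∫ u in Set.Ioc (π / 2) π, (1 - Real.cos u) / u ^ (1 + a) := by
        refine setIntegral_mono_on (integrableOn_const measure_Ioc_lt_top.ne)
          (hIint.mono_set hsub) measurableSet_Ioc hlow
    _ ≤ ∫ u in Set.Ioi (0:ℝ), (1 - Real.cos u) / u ^ (1 + a) := by
        refine setIntegral_mono_set hIint ?_ (HasSubset.Subset.eventuallyLE hsub)
        refine (ae_restrict_iff' measurableSet_Ioi).2 (Filter.Eventually.of_forall fun u hu => ?_)
        exact div_nonneg (aux_one_sub_cos_nonneg u) (Real.rpow_pos_of_pos hu _).le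

/-- the three-variable kernel -/
noncomputable def gker (ψ : ℝ → ℝ) (a x y u : ℝ) : ℝ :=
  (ψ x * ψ y) * ((1 - Real.cos ((x - y) * u)) / u ^ (1 + a))

open Set Real in
private lemma aux_gker_norm_le {ψ : ℝ → ℝ} {M a x y u : ℝ} (hM : ∀ z, |ψ z| ≤ M)
    (hxy : |x - y| ≤ 1) (hu : 0 < u) : ‖gker ψ a x y u‖ ≤ M * M * bnd a u := by
  have hM0 : 0 ≤ M := (abs_nonneg _).trans (hM 0)
  have hq0 : 0 ≤ (1 - Real.cos ((x - y) * u)) / u ^ (1 + a) :=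
    div_nonneg (aux_one_sub_cos_nonneg _) (Real.rpow_pos_of_pos hu _).le
  have hq := aux_kernel_le_bnd (a := a) (x - y) u hxy hu
  have hb0 : 0 ≤ bnd a u := aux_bnd_nonneg hu
  rw [Real.norm_eq_abs, gker, abs_mul, abs_of_nonneg hq0, abs_mul]
  have h1 : |ψ x| * |ψ y| ≤ M * M :=
    mul_le_mul (hM x) (hM y) (abs_nonneg _) hM0
  exact mul_le_mul h1 hq hq0 (by positivity)

theorem stmt0 (H : ℝ) (hH : H ∈ Set.Ioo (0:ℝ) 1)
    (ψ : ℝ → ℝ) (hψc : Continuous ψ)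
    (hψs : Function.support ψ ⊆ Set.Icc 0 1)
    (hψ0 : ∫ t in (0:ℝ)..1, ψ t = 0) :
    0 ≤ -(1/2) * ∫ x in (0:ℝ)..1, ∫ y in (0:ℝ)..1, ψ x * ψ y * |x - y| ^ (2*H) := by
  obtain ⟨hH0, hH1⟩ := hH
  set a : ℝ := 2 * H with ha
  have ha0 : (0:ℝ) < a := by rw [ha]; linarith
  have ha2 : a < 2 := by rw [ha]; linarith
  -- bound on ψ
  obtain ⟨M, hM⟩ : ∃ M : ℝ, ∀ x, |ψ x| ≤ M := by
    obtain ⟨C, hC⟩ := (isCompact_Icc (a := (0:ℝ)) (b := 1)).exists_bound_of_continuousOn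
      hψc.continuousOn
    refine ⟨max C 0, fun x => ?_⟩
    by_cases hx : x ∈ Set.Icc (0:ℝ) 1
    · exact le_trans (by simpa [Real.norm_eq_abs] using hC x hx) (le_max_left _ _)
    · have hx0 : ψ x = 0 := Function.notMem_support.1 fun hs => hx (hψs hs)
      simp [hx0, le_max_right]
  -- integrability of ψ pieces
  have hψI : IntegrableOn ψ (Set.Ioc 0 1) := hψc.integrableOn_Ioc
  have hψcosI : ∀ u : ℝ, IntegrableOn (fun y => ψ y * Real.cos (y * u)) (Set.Ioc 0 1) :=
    fun u => (hψc.mul (Real.continuous_cos.comp (continuous_id.mul continuous_const))).integrableOn_Ioc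
  have hψsinI : ∀ u : ℝ, IntegrableOn (fun y => ψ y * Real.sin (y * u)) (Set.Ioc 0 1) :=
    fun u => (hψc.mul (Real.continuous_sin.comp (continuous_id.mul continuous_const))).integrableOn_Ioc
  set I : ℝ := ∫ u in Set.Ioi (0:ℝ), (1 - Real.cos u) / u ^ (1 + a) with hIdef
  have hIpos : 0 < I := aux_I_pos ha0 ha2
  rw [intervalIntegral.integral_of_le zero_le_one]
  have hiny : ∀ x : ℝ, (∫ y in (0:ℝ)..1, ψ x * ψ y * |x - y| ^ a)
      = ∫ y in Set.Ioc (0:ℝ) 1, ψ x * ψ y * |x - y| ^ a :=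
    fun _ => intervalIntegral.integral_of_le zero_le_one
  simp_rw [hiny]
  set J : ℝ := ∫ x in Set.Ioc (0:ℝ) 1, ∫ y in Set.Ioc (0:ℝ) 1, ψ x * ψ y * |x - y| ^ a
    with hJdef
  suffices hJ : J ≤ 0 by linarith
  -- bound integrable on the product
  have hbndint : Integrable (fun p : ℝ × ℝ => (M * M) * bnd a p.2)
      ((volume.restrict (Set.Ioc (0:ℝ) 1)).prod (volume.restrict (Set.Ioi (0:ℝ)))) :=
    Integrable.mul_prod (show IntegrableOn (fun _ : ℝ => M * M) (Set.Ioc (0:ℝ) 1) from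
      integrableOn_const measure_Ioc_lt_top.ne)
      (aux_bnd_integrable ha0 ha2)
  -- step A: pointwise identity
  have hA : ∀ x y : ℝ, I * (ψ x * ψ y * |x - y| ^ a) = ∫ u in Set.Ioi (0:ℝ), gker ψ a x y u := by
    intro x y
    have hsc := aux_kernel_scaling ha0 (x - y)
    calc I * (ψ x * ψ y * |x - y| ^ a) = (ψ x * ψ y) * (|x - y| ^ a * I) := by ring
      _ = (ψ x * ψ y) * ∫ u in Set.Ioi (0:ℝ), (1 - Real.cos ((x - y) * u)) / u ^ (1 + a) := by
          rw [hsc]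
      _ = ∫ u in Set.Ioi (0:ℝ), gker ψ a x y u := by
          rw [← integral_const_mul]; rfl
  -- step B: swap y and u
  have hB : ∀ x : ℝ, (∫ y in Set.Ioc (0:ℝ) 1, ∫ u in Set.Ioi (0:ℝ), gker ψ a x y u)
      = ∫ u in Set.Ioi (0:ℝ), ∫ y in Set.Ioc (0:ℝ) 1, gker ψ a x y u := by
    intro x
    by_cases hx : ψ x = 0
    · simp [gker, hx]
    · have hxmem : x ∈ Set.Icc (0:ℝ) 1 := hψs (Function.mem_support.2 hx)
      refine integral_integral_swap ?_
      refine Integrable.mono' hbndint ?_ ?_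
      · refine Measurable.aestronglyMeasurable ?_
        exact ((measurable_const.mul (hψc.measurable.comp measurable_fst)).mul
          ((measurable_const.sub (Real.measurable_cos.comp
            ((measurable_const.sub measurable_fst).mul measurable_snd))).div
            (measurable_snd.pow measurable_const)))
      · rw [Measure.prod_restrict]
        refine (ae_restrict_iff' (measurableSet_Ioc.prod measurableSet_Ioi)).2
          (Filter.Eventually.of_forall ?_)
        rintro ⟨y, u⟩ ⟨hy, hu⟩
        have hxy : |x - y| ≤ 1 := by
          rw [abs_sub_le_iff]
          constructor <;> [skip; skip] <;>
            · obtain ⟨hy1, hy2⟩ := hy; obtain ⟨hx1, hx2⟩ := hxmem; linarith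
        exact aux_gker_norm_le hM hxy hu
  -- step C: swap x and u
  have hC : (∫ x in Set.Ioc (0:ℝ) 1, ∫ u in Set.Ioi (0:ℝ),
        ∫ y in Set.Ioc (0:ℝ) 1, gker ψ a x y u)
      = ∫ u in Set.Ioi (0:ℝ), ∫ x in Set.Ioc (0:ℝ) 1,
        ∫ y in Set.Ioc (0:ℝ) 1, gker ψ a x y u := by
    refine integral_integral_swap ?_
    refine Integrable.mono' hbndint ?_ ?_
    · have hmeas : StronglyMeasurable (Function.uncurry fun (p : ℝ × ℝ) (y : ℝ) =>
          gker ψ a p.1 y p.2) := by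
        refine Measurable.stronglyMeasurable ?_
        exact (((hψc.measurable.comp (measurable_fst.comp measurable_fst)).mul
          (hψc.measurable.comp measurable_snd)).mul
          ((measurable_const.sub (Real.measurable_cos.comp
            (((measurable_fst.comp measurable_fst).sub measurable_snd).mul
              (measurable_snd.comp measurable_fst)))).div
            ((measurable_snd.comp measurable_fst).pow measurable_const)))
      exact (hmeas.integral_prod_right).aestronglyMeasurable
    · rw [Measure.prod_restrict]
      refine (ae_restrict_iff' (measurableSet_Ioc.prod measurableSet_Ioi)).2
        (Filter.Eventually.of_forall ?_)
      rintro ⟨x, u⟩ ⟨hx, hu⟩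
      have hb0 : 0 ≤ bnd a u := aux_bnd_nonneg hu
      have hM0 : 0 ≤ M := (abs_nonneg _).trans (hM 0)
      calc ‖∫ y in Set.Ioc (0:ℝ) 1, gker ψ a x y u‖
          ≤ (M * M * bnd a u) * (volume (Set.Ioc (0:ℝ) 1)).toReal := by
            refine norm_setIntegral_le_of_norm_le_const measure_Ioc_lt_top (fun y hy => ?_)
            · have hxy : |x - y| ≤ 1 := by
                rw [abs_sub_le_iff]
                constructor <;>
                  · obtain ⟨hy1, hy2⟩ := hy; obtain ⟨hx1, hx2⟩ := hx; push_cast; linarith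
              exact aux_gker_norm_le hM hxy hu
        _ = M * M * bnd a u := by
            rw [Real.volume_Ioc, ENNReal.toReal_ofReal (by norm_num)]
            norm_num
  -- step D: inner double integral is nonpositive for each u > 0
  have hD : ∀ u ∈ Set.Ioi (0:ℝ), (∫ x in Set.Ioc (0:ℝ) 1,
      ∫ y in Set.Ioc (0:ℝ) 1, gker ψ a x y u) ≤ 0 := by
    intro u hu
    have hu0 : (0:ℝ) < u := hu
    set k : ℝ := (u ^ (1 + a))⁻¹ with hkdef
    have hk0 : 0 ≤ k := inv_nonneg.2 (Real.rpow_pos_of_pos hu0 _).le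
    set Q : ℝ := ∫ y in Set.Ioc (0:ℝ) 1, ψ y with hQdef
    set Cu : ℝ := ∫ y in Set.Ioc (0:ℝ) 1, ψ y * Real.cos (y * u) with hCudef
    set Su : ℝ := ∫ y in Set.Ioc (0:ℝ) 1, ψ y * Real.sin (y * u) with hSudef
    have hQ : Q = 0 := by
      rw [hQdef, ← intervalIntegral.integral_of_le zero_le_one, hψ0]
    have lin : ∀ c1 c2 c3 : ℝ, (∫ y in Set.Ioc (0:ℝ) 1,
        (c1 * ψ y - c2 * (ψ y * Real.cos (y * u)) - c3 * (ψ y * Real.sin (y * u))))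
        = c1 * Q - c2 * Cu - c3 * Su := by
      intro c1 c2 c3
      have h12 : IntegrableOn (fun y => c1 * ψ y - c2 * (ψ y * Real.cos (y * u)))
          (Set.Ioc (0:ℝ) 1) := (hψI.const_mul c1).sub ((hψcosI u).const_mul c2)
      have h3 : IntegrableOn (fun y => c3 * (ψ y * Real.sin (y * u)))
          (Set.Ioc (0:ℝ) 1) := (hψsinI u).const_mul c3
      have h1 : IntegrableOn (fun y => c1 * ψ y) (Set.Ioc (0:ℝ) 1) := hψI.const_mul c1
      have h2 : IntegrableOn (fun y => c2 * (ψ y * Real.cos (y * u)))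
          (Set.Ioc (0:ℝ) 1) := (hψcosI u).const_mul c2
      rw [integral_sub h12 h3, integral_sub h1 h2,
        integral_const_mul, integral_const_mul, integral_const_mul]
    have hg : ∀ x y : ℝ, gker ψ a x y u = k * (ψ x * ψ y
        - (ψ x * Real.cos (x * u)) * (ψ y * Real.cos (y * u))
        - (ψ x * Real.sin (x * u)) * (ψ y * Real.sin (y * u))) := by
      intro x y
      rw [gker, sub_mul x y u, Real.cos_sub, div_eq_mul_inv, ← hkdef]
      ring
    have inner : ∀ x : ℝ, (∫ y in Set.Ioc (0:ℝ) 1, gker ψ a x y u)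
        = k * (ψ x * Q - (ψ x * Real.cos (x * u)) * Cu - (ψ x * Real.sin (x * u)) * Su) := by
      intro x
      simp_rw [hg]
      rw [integral_const_mul, lin]
    calc (∫ x in Set.Ioc (0:ℝ) 1, ∫ y in Set.Ioc (0:ℝ) 1, gker ψ a x y u)
        = ∫ x in Set.Ioc (0:ℝ) 1, k * (Q * ψ x - Cu * (ψ x * Real.cos (x * u))
            - Su * (ψ x * Real.sin (x * u))) := by
          simp_rw [inner]
          refine integral_congr_ae (Filter.Eventually.of_forall fun x => ?_)
          ring
      _ = k * (Q * Q - Cu * Cu - Su * Su) := by rw [integral_const_mul, lin]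
      _ ≤ 0 := by
          rw [hQ]
          have hpos : (0:ℝ) ≤ Cu * Cu + Su * Su :=
            add_nonneg (mul_self_nonneg _) (mul_self_nonneg _)
          nlinarith [mul_nonneg hk0 hpos]
  -- assemble
  have hK : I * J = ∫ u in Set.Ioi (0:ℝ), ∫ x in Set.Ioc (0:ℝ) 1,
      ∫ y in Set.Ioc (0:ℝ) 1, gker ψ a x y u := by
    calc I * J = ∫ x in Set.Ioc (0:ℝ) 1,
          I * ∫ y in Set.Ioc (0:ℝ) 1, ψ x * ψ y * |x - y| ^ a := by
          rw [hJdef, ← integral_const_mul]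
      _ = ∫ x in Set.Ioc (0:ℝ) 1, ∫ y in Set.Ioc (0:ℝ) 1,
            I * (ψ x * ψ y * |x - y| ^ a) := by
          refine integral_congr_ae (Filter.Eventually.of_forall fun x => ?_)
          exact (integral_const_mul _ _).symm
      _ = ∫ x in Set.Ioc (0:ℝ) 1, ∫ y in Set.Ioc (0:ℝ) 1,
            ∫ u in Set.Ioi (0:ℝ), gker ψ a x y u := by
          refine integral_congr_ae (Filter.Eventually.of_forall fun x => ?_)
          exact integral_congr_ae (Filter.Eventually.of_forall fun y => hA x y)
      _ = ∫ x in Set.Ioc (0:ℝ) 1, ∫ u in Set.Ioi (0:ℝ),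
            ∫ y in Set.Ioc (0:ℝ) 1, gker ψ a x y u := by
          exact integral_congr_ae (Filter.Eventually.of_forall fun x => hB x)
      _ = _ := hC
  have hKneg : (∫ u in Set.Ioi (0:ℝ), ∫ x in Set.Ioc (0:ℝ) 1,
      ∫ y in Set.Ioc (0:ℝ) 1, gker ψ a x y u) ≤ 0 :=
    integral_nonpos_of_ae ((ae_restrict_iff' measurableSet_Ioi).2
      (Filter.Eventually.of_forall fun u hu => hD u hu))
  have hIJ : I * J ≤ 0 := hK ▸ hKneg
  by_contra hcon
  push_neg at hcon
  nlinarith [mul_pos hIpos hcon]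
end

section
/- Let ψ be continuous with support in [0,1], ∫₀¹ψ = 0, and H ∈ (0,1), Q ≥ 1 vanishing moments. If Q ≥ 2, or if Q = 1 and H < 3/4, then the series Σ_{k∈ℤ} (∫₀¹∫₀¹ ψ(x)ψ(x')|x-x'+k|^{2H} dx dx')² converges absolutely. -/
open MeasureTheory

lemma mom_zero_single (Q : ℕ) (ψ : ℝ → ℝ) (hψc : Continuous ψ)
    (hmom : ∀ p : ℕ, p < Q → ∫ t in (0:ℝ)..1, t ^ p * ψ t = 0)
    (σ c : ℝ) {j : ℕ} (hj : j < Q) :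
    ∫ x in (0:ℝ)..1, (σ * x + c) ^ j * ψ x = 0 := by
  have hrw : ∀ x : ℝ, (σ * x + c) ^ j * ψ x
      = ∑ l ∈ Finset.range (j+1), (σ ^ l * c ^ (j - l) * (j.choose l : ℝ)) * (x ^ l * ψ x) := by
    intro x
    rw [add_pow, Finset.sum_mul]
    exact Finset.sum_congr rfl fun l _ => by ring
  simp only [hrw]
  rw [intervalIntegral.integral_finset_sum
    (fun l _ => (Continuous.intervalIntegrable (by fun_prop) _ _))]
  refine Finset.sum_eq_zero fun l hl => ?_
  rw [intervalIntegral.integral_const_mul,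
    hmom l (lt_of_le_of_lt (Nat.lt_succ_iff.mp (Finset.mem_range.mp hl)) hj), mul_zero]

lemma mom_zero_double (Q : ℕ) (ψ : ℝ → ℝ) (hψc : Continuous ψ)
    (hmom : ∀ p : ℕ, p < Q → ∫ t in (0:ℝ)..1, t ^ p * ψ t = 0)
    (σ c : ℝ) {i : ℕ} (hi : i < 2*Q) :
    ∫ x in (0:ℝ)..1, ∫ y in (0:ℝ)..1, ψ x * ψ y * (σ * (x - y) + c) ^ i = 0 := by
  have hrw : ∀ x y : ℝ, ψ x * ψ y * (σ * (x - y) + c) ^ i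
      = ∑ m ∈ Finset.range (i+1),
          ((-1:ℝ)^(m+i) * σ^(i-m) * (i.choose m : ℝ) * ((σ*x+c)^m * ψ x)) * (y^(i-m) * ψ y) := by
    intro x y
    rw [show σ * (x - y) + c = (σ*x+c) - σ*y by ring, sub_pow, Finset.mul_sum]
    exact Finset.sum_congr rfl fun m _ => by ring
  have hinner : ∀ x : ℝ, (∫ y in (0:ℝ)..1, ψ x * ψ y * (σ * (x - y) + c) ^ i)
      = ∑ m ∈ Finset.range (i+1),
          ((-1:ℝ)^(m+i) * σ^(i-m) * (i.choose m : ℝ) * ((σ*x+c)^m * ψ x))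
            * ∫ y in (0:ℝ)..1, y^(i-m) * ψ y := by
    intro x
    simp only [hrw]
    rw [intervalIntegral.integral_finset_sum
      (fun m _ => (Continuous.intervalIntegrable (by fun_prop) _ _))]
    exact Finset.sum_congr rfl fun m _ => intervalIntegral.integral_const_mul _ _
  simp only [hinner]
  rw [intervalIntegral.integral_finset_sum
    (fun m _ => (Continuous.intervalIntegrable (by fun_prop) _ _))]
  refine Finset.sum_eq_zero fun m hm => ?_
  rcases lt_or_ge m Q with hmQ | hmQ
  · have h0 := mom_zero_single Q ψ hψc hmom σ c hmQ
    have hfe : (fun x => ((-1:ℝ)^(m+i) * σ^(i-m) * (i.choose m : ℝ) * ((σ*x+c)^m * ψ x))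
          * ∫ y in (0:ℝ)..1, y^(i-m) * ψ y)
        = fun x => (((-1:ℝ)^(m+i) * σ^(i-m) * (i.choose m : ℝ))
            * ∫ y in (0:ℝ)..1, y^(i-m) * ψ y) * ((σ*x+c)^m * ψ x) := by
      funext x; ring
    rw [hfe, intervalIntegral.integral_const_mul, h0, mul_zero]
  · have hm' : m ≤ i := Nat.lt_succ_iff.mp (Finset.mem_range.mp hm)
    rw [hmom (i - m) (by omega)]
    simp

lemma iter_rpow (p a b : ℝ) (ha : 0 < a) (hab : a < b) :
    ∀ (m : ℕ), ∀ t ∈ Set.Icc a b,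
      iteratedDerivWithin m (fun s : ℝ => s ^ p) (Set.Icc a b) t
        = (∏ i ∈ Finset.range m, (p - i)) * t ^ (p - m) := by
  intro m
  induction m with
  | zero => intro t ht; simp
  | succ m ih =>
    intro t ht
    have ht0 : (0:ℝ) < t := lt_of_lt_of_le ha ht.1
    have hu := (uniqueDiffOn_Icc hab) t ht
    rw [iteratedDerivWithin_succ,
      derivWithin_congr (fun s hs => ih s hs) (ih t ht),
      DifferentiableAt.derivWithin
        (((Real.differentiableAt_rpow_const_of_ne _ (ne_of_gt ht0)).const_mul _)) hu,
      deriv_const_mul _ (Real.differentiableAt_rpow_const_of_ne _ (ne_of_gt ht0)),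
      Real.deriv_rpow_const,
      Finset.prod_range_succ]
    push_cast
    rw [show p - ((m:ℝ)+1) = p - (m:ℝ) - 1 by ring]
    ring

lemma central (H : ℝ) (hH : H ∈ Set.Ioo (0:ℝ) 1) (Q : ℕ)
    (ψ : ℝ → ℝ) (hψc : Continuous ψ)
    (hmom : ∀ p : ℕ, p < Q → ∫ t in (0:ℝ)..1, t ^ p * ψ t = 0)
    (M : ℝ) (hM : ∀ t, |ψ t| ≤ M)
    (n : ℕ) (hn1 : 1 ≤ n) (hn : ∀ i, i ≤ n → i < 2*Q)
    (σ : ℝ) (hσ : |σ| ≤ 1) (m : ℝ) (hm : 2 ≤ m) :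
    |∫ x in (0:ℝ)..1, ∫ y in (0:ℝ)..1, ψ x * ψ y * (σ * (x - y) + m) ^ (2*H)|
      ≤ (M * M * ((∏ i ∈ Finset.range (n+1), |2*H - (i:ℝ)|) * 2^(n+1) / (n.factorial : ℝ)))
          * (m-1) ^ (2*H - (n+1)) := by
  obtain ⟨hH0, hH1⟩ := hH
  set a : ℝ := m - 1 with ha_def
  set b : ℝ := m + 1 with hb_def
  have ha1 : (1:ℝ) ≤ a := by simp [ha_def]; linarith
  have ha0 : (0:ℝ) < a := lt_of_lt_of_le one_pos ha1
  have hab : a < b := by simp [ha_def, hb_def]; linarith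
  have hM0 : 0 ≤ M := le_trans (abs_nonneg _) (hM 0)
  set f : ℝ → ℝ := fun t => (max t a) ^ (2*H) with hf_def
  have hfc : Continuous f := by
    apply (continuous_id.max continuous_const).rpow_const
    intro t; exact Or.inl (ne_of_gt (lt_of_lt_of_le ha0 (le_max_right t a)))
  have hEq : Set.EqOn f (fun t => t ^ (2*H)) (Set.Icc a b) := by
    intro t ht; simp only [hf_def, max_eq_left ht.1]
  have hcd : ContDiffOn ℝ (n+1) f (Set.Icc a b) := by
    refine ContDiffOn.congr (fun t ht => ?_) hEq
    exact (Real.contDiffAt_rpow_const_of_ne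
      (ne_of_gt (lt_of_lt_of_le ha0 ht.1))).contDiffWithinAt
  set D : ℝ := ∏ i ∈ Finset.range (n+1), |2*H - (i:ℝ)| with hD_def
  have hD0 : 0 ≤ D := Finset.prod_nonneg fun i _ => abs_nonneg _
  have hexp : 2*H - ((n:ℝ)+1) ≤ 0 := by
    have : (1:ℝ) ≤ (n:ℝ) := by exact_mod_cast hn1
    linarith
  have hC : ∀ y ∈ Set.Icc a b, ‖iteratedDerivWithin (n+1) f (Set.Icc a b) y‖
      ≤ D * a ^ (2*H - (n+1)) := by
    intro y hy
    have hy0 : (0:ℝ) < y := lt_of_lt_of_le ha0 hy.1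
    rw [iteratedDerivWithin_congr hEq hy,
      iter_rpow (2*H) a b ha0 hab (n+1) y hy, Real.norm_eq_abs, abs_mul, Finset.abs_prod]
    push_cast
    rw [abs_of_pos (Real.rpow_pos_of_pos hy0 _)]
    exact mul_le_mul_of_nonneg_left
      (Real.rpow_le_rpow_of_nonpos ha0 hy.1 (by push_cast at hexp ⊢; linarith)) hD0
  have htay : ∀ u ∈ Set.Icc a b,
      |f u - taylorWithinEval f n (Set.Icc a b) a u|
        ≤ D * a ^ (2*H - (n+1)) * 2^(n+1) / (n.factorial : ℝ) := by
    intro u hu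
    have h1 := taylor_mean_remainder_bound (le_of_lt hab) hcd hu hC
    rw [Real.norm_eq_abs] at h1
    refine le_trans h1 ?_
    have h2 : (u - a)^(n+1) ≤ 2^(n+1) := by
      apply pow_le_pow_left₀ (by linarith [hu.1])
      have := hu.2; simp only [hb_def, ha_def] at this ⊢; linarith
    gcongr
  -- the Taylor polynomial, made explicit
  set P : ℝ → ℝ := fun u => ∑ i ∈ Finset.range (n+1),
      ((i.factorial : ℝ)⁻¹ * (u - a)^i) * iteratedDerivWithin i f (Set.Icc a b) a with hP_def
  have hP : ∀ u : ℝ, taylorWithinEval f n (Set.Icc a b) a u = P u := by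
    intro u; rw [taylor_within_apply]; simp [hP_def, smul_eq_mul]
  have hPc : Continuous P := by
    apply continuous_finset_sum
    intro i _
    exact (Continuous.mul (continuous_const.mul (((continuous_id.sub continuous_const).pow i)))
      continuous_const)
  -- pointwise rewriting of (u - a)
  have hbase : ∀ x y : ℝ, σ * (x - y) + m - a = σ * (x - y) + (m - a) := fun x y => by ring
  -- the Taylor polynomial integrates to zero against ψ ⊗ ψ
  have hZ : ∫ x in (0:ℝ)..1, ∫ y in (0:ℝ)..1, ψ x * ψ y * P (σ * (x - y) + m) = 0 := by
    have hrw : ∀ x y : ℝ, ψ x * ψ y * P (σ * (x - y) + m)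
        = ∑ i ∈ Finset.range (n+1),
            (((i.factorial : ℝ)⁻¹ * iteratedDerivWithin i f (Set.Icc a b) a)
              * (ψ x * ψ y * (σ * (x - y) + (m - a))^i)) := by
      intro x y
      simp only [hP_def, Finset.mul_sum]
      exact Finset.sum_congr rfl fun i _ => by rw [hbase x y]; ring
    have hinner : ∀ x : ℝ, (∫ y in (0:ℝ)..1, ψ x * ψ y * P (σ * (x - y) + m))
        = ∑ i ∈ Finset.range (n+1),
            (((i.factorial : ℝ)⁻¹ * iteratedDerivWithin i f (Set.Icc a b) a)
              * ∫ y in (0:ℝ)..1, ψ x * ψ y * (σ * (x - y) + (m - a))^i) := by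
      intro x
      simp only [hrw]
      rw [intervalIntegral.integral_finset_sum
        (fun i _ => (Continuous.intervalIntegrable (by fun_prop) _ _))]
      exact Finset.sum_congr rfl fun i _ => intervalIntegral.integral_const_mul _ _
    simp only [hinner]
    rw [intervalIntegral.integral_finset_sum (fun i _ => (Continuous.intervalIntegrable ?_ _ _))]
    · refine Finset.sum_eq_zero fun i hi => ?_
      rw [intervalIntegral.integral_const_mul, mom_zero_double Q ψ hψc hmom σ (m - a)
        (hn i (Nat.lt_succ_iff.mp (Finset.mem_range.mp hi))), mul_zero]
    · apply Continuous.mul continuous_const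
      apply intervalIntegral.continuous_parametric_intervalIntegral_of_continuous'
      fun_prop
  -- membership of the argument in [a,b]
  have hmem : ∀ x ∈ Set.Icc (0:ℝ) 1, ∀ y ∈ Set.Icc (0:ℝ) 1, σ * (x - y) + m ∈ Set.Icc a b := by
    intro x hx y hy
    have h1 : |σ * (x - y)| ≤ 1 := by
      rw [abs_mul]
      have h2 : |x - y| ≤ 1 := by
        rw [abs_le]; constructor <;> [linarith [hx.1, hy.2]; linarith [hx.2, hy.1]]
      calc |σ| * |x - y| ≤ 1 * 1 := mul_le_mul hσ h2 (abs_nonneg _) zero_le_one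
        _ = 1 := by ring
    rw [abs_le] at h1
    constructor
    · simp only [ha_def]; linarith [h1.1]
    · simp only [hb_def]; linarith [h1.2]
  have hIcc : Set.uIcc (0:ℝ) 1 = Set.Icc 0 1 := Set.uIcc_of_le zero_le_one
  -- splitting the inner integral
  have hsplit : Set.EqOn
      (fun x => ∫ y in (0:ℝ)..1, ψ x * ψ y * (σ * (x - y) + m) ^ (2*H))
      (fun x => (∫ y in (0:ℝ)..1, ψ x * ψ y * (f (σ * (x - y) + m) - P (σ * (x - y) + m)))
        + ∫ y in (0:ℝ)..1, ψ x * ψ y * P (σ * (x - y) + m)) (Set.uIcc 0 1) := by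
    intro x hx
    rw [hIcc] at hx
    have h1 : Set.EqOn (fun y => ψ x * ψ y * (σ * (x - y) + m) ^ (2*H))
        (fun y => ψ x * ψ y * (f (σ * (x - y) + m) - P (σ * (x - y) + m))
          + ψ x * ψ y * P (σ * (x - y) + m)) (Set.uIcc 0 1) := by
      intro y hy
      rw [hIcc] at hy
      have := hEq (hmem x hx y hy)
      simp only at this ⊢
      rw [this]; ring
    simp only
    rw [intervalIntegral.integral_congr h1]
    rw [intervalIntegral.integral_add
      (Continuous.intervalIntegrable (by fun_prop) _ _)
      (Continuous.intervalIntegrable (by fun_prop) _ _)]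
  rw [intervalIntegral.integral_congr hsplit,
    intervalIntegral.integral_add
      (Continuous.intervalIntegrable
        (intervalIntegral.continuous_parametric_intervalIntegral_of_continuous' (by fun_prop) _ _) _ _)
      (Continuous.intervalIntegrable
        (intervalIntegral.continuous_parametric_intervalIntegral_of_continuous' (by fun_prop) _ _) _ _),
    hZ, add_zero]
  -- final norm estimate
  set B : ℝ := D * a ^ (2*H - ((n:ℝ)+1)) * 2^(n+1) / (n.factorial : ℝ) with hB_def
  have hB0 : 0 ≤ B := by
    apply div_nonneg _ (Nat.cast_nonneg _)
    positivity
  have houter : ∀ x ∈ Set.uIoc (0:ℝ) 1,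
      ‖∫ y in (0:ℝ)..1, ψ x * ψ y * (f (σ * (x - y) + m) - P (σ * (x - y) + m))‖
        ≤ M * M * B := by
    intro x hx
    have hx' : x ∈ Set.Icc (0:ℝ) 1 := by
      rw [Set.uIoc_of_le zero_le_one] at hx; exact ⟨le_of_lt hx.1, hx.2⟩
    have hin : ∀ y ∈ Set.uIoc (0:ℝ) 1,
        ‖ψ x * ψ y * (f (σ * (x - y) + m) - P (σ * (x - y) + m))‖ ≤ M * M * B := by
      intro y hy
      have hy' : y ∈ Set.Icc (0:ℝ) 1 := by
        rw [Set.uIoc_of_le zero_le_one] at hy; exact ⟨le_of_lt hy.1, hy.2⟩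
      have hu := hmem x hx' y hy'
      have h3 := htay _ hu
      rw [hP] at h3
      rw [Real.norm_eq_abs, abs_mul, abs_mul]
      exact mul_le_mul (mul_le_mul (hM x) (hM y) (abs_nonneg _) hM0) h3 (abs_nonneg _)
        (by positivity)
    calc ‖∫ y in (0:ℝ)..1, ψ x * ψ y * (f (σ * (x - y) + m) - P (σ * (x - y) + m))‖
        ≤ M * M * B * |1 - 0| := intervalIntegral.norm_integral_le_of_norm_le_const hin
      _ = M * M * B := by norm_num
  have hfinal := intervalIntegral.norm_integral_le_of_norm_le_const houter
  rw [Real.norm_eq_abs] at hfinal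
  calc |∫ x in (0:ℝ)..1, ∫ y in (0:ℝ)..1,
        ψ x * ψ y * (f (σ * (x - y) + m) - P (σ * (x - y) + m))|
      ≤ M * M * B * |1 - 0| := hfinal
    _ = (M * M * (D * 2^(n+1) / (n.factorial : ℝ))) * a ^ (2*H - ((n:ℝ)+1)) := by
        simp only [hB_def]
        rw [show |(1:ℝ) - 0| = 1 by norm_num]
        ring


theorem stmt4 (H : ℝ) (hH : H ∈ Set.Ioo (0:ℝ) 1) (Q : ℕ)
    (hQ : 2 ≤ Q ∨ (Q = 1 ∧ H < 3/4))
    (ψ : ℝ → ℝ) (hψc : Continuous ψ) (hψs : Function.support ψ ⊆ Set.Icc 0 1)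
    (hmom : ∀ p : ℕ, p < Q → ∫ t in (0:ℝ)..1, t ^ p * ψ t = 0) :
    Summable (fun k : ℤ =>
      (∫ x in (0:ℝ)..1, ∫ y in (0:ℝ)..1, ψ x * ψ y * |x - y + (k:ℝ)| ^ (2*H)) ^ 2) := by
  obtain ⟨hH0, hH1⟩ := hH
  -- bound on ψ
  have hcs : HasCompactSupport ψ :=
    HasCompactSupport.of_support_subset_isCompact isCompact_Icc hψs
  obtain ⟨M, hM⟩ := hcs.exists_bound_of_continuous hψc
  simp only [Real.norm_eq_abs] at hM
  have hM0 : 0 ≤ M := le_trans (abs_nonneg _) (hM 0)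
  -- choice of the Taylor order
  obtain ⟨n, hn1, hn, hs⟩ : ∃ n : ℕ, 1 ≤ n ∧ (∀ i, i ≤ n → i < 2*Q)
      ∧ 1 < 2*((n:ℝ)+1) - 4*H := by
    rcases hQ with h | ⟨h1, h2⟩
    · exact ⟨3, by omega, fun i hi => by omega, by norm_num; linarith⟩
    · exact ⟨1, le_refl 1, fun i hi => by omega, by norm_num; linarith⟩
  set K : ℝ := M * M * ((∏ i ∈ Finset.range (n+1), |2*H - (i:ℝ)|) * 2^(n+1) / (n.factorial : ℝ))
    with hK_def
  have hK0 : 0 ≤ K := by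
    apply mul_nonneg (mul_nonneg hM0 hM0)
    apply div_nonneg _ (Nat.cast_nonneg _)
    exact mul_nonneg (Finset.prod_nonneg fun i _ => abs_nonneg _) (by positivity)
  set s : ℝ := 2*((n:ℝ)+1) - 4*H with hs_def
  set C0 : ℝ := K^2 * (2:ℝ) ^ s with hC0_def
  -- the pointwise bound for |k| ≥ 2
  have hbound : ∀ k : ℤ, 2 ≤ |k| →
      (∫ x in (0:ℝ)..1, ∫ y in (0:ℝ)..1, ψ x * ψ y * |x - y + (k:ℝ)| ^ (2*H)) ^ 2
        ≤ C0 * |(k:ℝ)| ^ (-s) := by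
    intro k hk
    set σ : ℝ := if 0 ≤ k then 1 else -1 with hσ_def
    have hσ1 : |σ| ≤ 1 := by
      simp only [hσ_def]; split_ifs <;> norm_num
    set m : ℝ := |(k:ℝ)| with hm_def
    have hm2 : 2 ≤ m := by
      simp only [hm_def, ← Int.cast_abs]; exact_mod_cast hk
    have hIcc : Set.uIcc (0:ℝ) 1 = Set.Icc 0 1 := Set.uIcc_of_le zero_le_one
    -- rewrite the integrand
    have hcongr : (∫ x in (0:ℝ)..1, ∫ y in (0:ℝ)..1, ψ x * ψ y * |x - y + (k:ℝ)| ^ (2*H))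
        = ∫ x in (0:ℝ)..1, ∫ y in (0:ℝ)..1, ψ x * ψ y * (σ * (x - y) + m) ^ (2*H) := by
      apply intervalIntegral.integral_congr
      intro x hx
      rw [hIcc] at hx
      apply intervalIntegral.integral_congr
      intro y hy
      rw [hIcc] at hy
      simp only
      congr 2
      by_cases h : 0 ≤ k
      · have hk2 : (2:ℝ) ≤ (k:ℝ) := by
          have : (2:ℤ) ≤ k := by rwa [abs_of_nonneg h] at hk
          exact_mod_cast this
        have : |x - y + (k:ℝ)| = x - y + k := abs_of_pos (by linarith [hx.1, hx.2, hy.1, hy.2])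
        rw [this]
        simp only [hσ_def, hm_def, if_pos h, abs_of_nonneg (by exact_mod_cast h : (0:ℝ) ≤ (k:ℝ))]
        ring
      · have hk2 : (k:ℝ) ≤ -2 := by
          have : k ≤ -2 := by have := abs_of_neg (by omega : k < 0); omega
          exact_mod_cast this
        have : |x - y + (k:ℝ)| = -(x - y + k) := abs_of_neg (by linarith [hx.1, hx.2, hy.1, hy.2])
        rw [this]
        simp only [hσ_def, hm_def, if_neg h, abs_of_neg (by linarith : (k:ℝ) < 0)]
        ring
    rw [hcongr]
    have h1 := central H ⟨hH0, hH1⟩ Q ψ hψc hmom M hM n hn1 hn σ hσ1 m hm2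
    have hm0 : (0:ℝ) < m := by linarith
    have hexp : 2*H - ((n:ℝ)+1) ≤ 0 := by
      have : (1:ℝ) ≤ (n:ℝ) := by exact_mod_cast hn1
      linarith
    calc (∫ x in (0:ℝ)..1, ∫ y in (0:ℝ)..1, ψ x * ψ y * (σ * (x - y) + m) ^ (2*H)) ^ 2
        = |∫ x in (0:ℝ)..1, ∫ y in (0:ℝ)..1, ψ x * ψ y * (σ * (x - y) + m) ^ (2*H)| ^ 2 := by
          rw [sq_abs]
      _ ≤ (K * (m-1) ^ (2*H - ((n:ℝ)+1))) ^ 2 := by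
          apply pow_le_pow_left₀ (abs_nonneg _) h1
      _ = K^2 * ((m-1) ^ (2*H - ((n:ℝ)+1))) ^ 2 := by ring
      _ = K^2 * (m-1) ^ ((2*H - ((n:ℝ)+1)) * 2) := by
          rw [← Real.rpow_natCast ((m-1) ^ (2*H - ((n:ℝ)+1))) 2, ← Real.rpow_mul (by linarith)]
          norm_num
      _ ≤ K^2 * (m/2) ^ ((2*H - ((n:ℝ)+1)) * 2) := by
          apply mul_le_mul_of_nonneg_left _ (by positivity)
          apply Real.rpow_le_rpow_of_nonpos (by linarith) (by linarith) (by linarith)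
      _ = C0 * m ^ (-s) := by
          rw [Real.div_rpow (by linarith) (by norm_num)]
          rw [show (2*H - ((n:ℝ)+1)) * 2 = -s by simp only [hs_def]; ring]
          rw [Real.rpow_neg (by norm_num : (0:ℝ) ≤ 2)]
          simp only [hC0_def]
          field_simp
  -- conclude by comparison
  apply Summable.of_norm_bounded_eventually (g := fun k : ℤ => C0 * |(k:ℝ)| ^ (-s))
    ((Real.summable_abs_int_rpow hs).mul_left C0)
  have hfin : {k : ℤ | ¬ 2 ≤ |k|}.Finite := by
    apply Set.Finite.subset (Set.finite_Icc (-1:ℤ) 1)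
    intro k hk
    simp only [Set.mem_setOf_eq] at hk
    have := abs_nonneg k
    have h2 := abs_le.mp (by omega : |k| ≤ 1)
    simp only [Set.mem_Icc]
    omega
  apply Filter.Eventually.mono (Filter.eventually_cofinite.mpr hfin)
  intro k hk
  rw [Real.norm_eq_abs, abs_of_nonneg (sq_nonneg _)]
  exact hbound k hk
end

section
/- For H ∈ (3/4, 1) and k ≥ 2, the integral ∫_{[0,1]^k} (|x₁-x₂|·|x₂-x₃|⋯|x_{k-1}-x_k|·|x_k-x₁|)^{2H-2} dx₁⋯dx_k is finite. -/
open MeasureTheory Real Set intervalIntegral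

noncomputable def um : Measure ℝ := volume.restrict (Set.Icc 0 1)

instance : IsProbabilityMeasure um := ⟨by simp [um, Real.volume_Icc]⟩

lemma core_bound {γ : ℝ} (hγ1 : -1 < γ) (hγ0 : γ < 0) {a : ℝ} (ha : a ∈ Set.Icc (0:ℝ) 1) :
    IntegrableOn (fun t => |a - t| ^ γ) (Set.Icc 0 1) volume ∧
    ∫ t in Set.Icc (0:ℝ) 1, |a - t| ^ γ ≤ 2 / (γ + 1) := by
  obtain ⟨h0a, ha1⟩ := ha
  have hc : 0 < γ + 1 := by linarith
  have e1 : Set.EqOn (fun t => |a - t| ^ γ) (fun t => (a - t) ^ γ) (Set.uIcc 0 a) := by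
    intro t ht
    rw [Set.uIcc_of_le h0a] at ht
    show |a - t| ^ γ = (a - t) ^ γ
    rw [abs_of_nonneg (by linarith [ht.2] : (0:ℝ) ≤ a - t)]
  have e2 : Set.EqOn (fun t => |a - t| ^ γ) (fun t => (t - a) ^ γ) (Set.uIcc a 1) := by
    intro t ht
    rw [Set.uIcc_of_le ha1] at ht
    show |a - t| ^ γ = (t - a) ^ γ
    rw [abs_of_nonpos (by linarith [ht.1] : a - t ≤ 0), neg_sub]
  have I1 : IntervalIntegrable (fun t => (a - t) ^ γ) volume 0 a := by
    have := (intervalIntegrable_rpow' (a := a) (b := 0) hγ1).comp_sub_left a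
    simpa using this
  have I2 : IntervalIntegrable (fun t => (t - a) ^ γ) volume a 1 := by
    have := (intervalIntegrable_rpow' (a := 0) (b := 1 - a) hγ1).comp_sub_right a
    simpa using this
  have I1' : IntervalIntegrable (fun t => |a - t| ^ γ) volume 0 a := by
    apply I1.congr
    intro t ht
    exact (e1 (Set.uIoc_subset_uIcc ht)).symm
  have I2' : IntervalIntegrable (fun t => |a - t| ^ γ) volume a 1 := by
    apply I2.congr
    intro t ht
    exact (e2 (Set.uIoc_subset_uIcc ht)).symm
  have hII : IntervalIntegrable (fun t => |a - t| ^ γ) volume 0 1 := I1'.trans I2'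
  constructor
  · rw [← Set.uIcc_of_le (by norm_num : (0:ℝ) ≤ 1)]
    exact ((intervalIntegrable_iff' (h := enorm_ne_top)).mp hII)
  · have hval : ∫ t in Set.Icc (0:ℝ) 1, |a - t| ^ γ = ∫ t in (0:ℝ)..1, |a - t| ^ γ := by
      rw [intervalIntegral.integral_of_le (by norm_num : (0:ℝ) ≤ 1),
        MeasureTheory.integral_Icc_eq_integral_Ioc]
    rw [hval, ← intervalIntegral.integral_add_adjacent_intervals I1' I2']
    have v1 : ∫ t in (0:ℝ)..a, |a - t| ^ γ = a ^ (γ + 1) / (γ + 1) := by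
      rw [intervalIntegral.integral_congr e1]
      rw [intervalIntegral.integral_comp_sub_left (fun u => u ^ γ) a]
      rw [integral_rpow (Or.inl hγ1)]
      simp [Real.zero_rpow (by linarith : γ + 1 ≠ 0)]
    have v2 : ∫ t in a..(1:ℝ), |a - t| ^ γ = (1 - a) ^ (γ + 1) / (γ + 1) := by
      rw [intervalIntegral.integral_congr e2]
      rw [intervalIntegral.integral_comp_sub_right (fun u => u ^ γ) a]
      rw [integral_rpow (Or.inl hγ1)]
      simp [Real.zero_rpow (by linarith : γ + 1 ≠ 0)]
    rw [v1, v2]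
    have b1 : a ^ (γ + 1) ≤ 1 := Real.rpow_le_one h0a ha1 hc.le
    have b2 : (1 - a) ^ (γ + 1) ≤ 1 := Real.rpow_le_one (by linarith) (by linarith) hc.le
    rw [← add_div]
    have : a ^ (γ + 1) + (1 - a) ^ (γ + 1) ≤ 2 := by linarith
    gcongr

lemma l1 {γ : ℝ} (hγ1 : -1 < γ) (hγ0 : γ < 0) (a : ℝ) :
    ∫⁻ t, ENNReal.ofReal (|a - t| ^ γ) ∂um ≤ ENNReal.ofReal (2 / (γ + 1)) := by
  set a' := max 0 (min 1 a) with ha'def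
  have ha' : a' ∈ Set.Icc (0:ℝ) 1 := ⟨le_max_left _ _, max_le (by norm_num) (min_le_left _ _)⟩
  have step1 : ∫⁻ t, ENNReal.ofReal (|a - t| ^ γ) ∂um
      ≤ ∫⁻ t, ENNReal.ofReal (|a' - t| ^ γ) ∂um := by
    apply lintegral_mono_ae
    have hmem : ∀ᵐ t ∂um, t ∈ Set.Icc (0:ℝ) 1 := ae_restrict_mem measurableSet_Icc
    have hne : ∀ᵐ t ∂um, t ≠ a' := by
      rw [ae_iff]
      have : {t : ℝ | ¬ t ≠ a'} = {a'} := by ext t; simp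
      rw [this]
      exact le_antisymm ((Measure.restrict_apply_le _ _).trans (by simp)) (by simp)
    filter_upwards [hmem, hne] with t ht htne
    apply ENNReal.ofReal_le_ofReal
    have h1 : |a' - t| ≤ |a - t| := by
      rcases lt_or_ge a 0 with h | h
      · have : a' = 0 := by
          rw [ha'def, min_eq_right (by linarith), max_eq_left (by linarith)]
        rw [this]
        rw [abs_of_nonpos (by linarith [ht.1]), abs_of_nonpos (by linarith [ht.1])]
        simp; linarith [ht.1]
      · rcases le_or_gt a 1 with h2 | h2
        · have : a' = a := by rw [ha'def, min_eq_right h2, max_eq_right h]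
          rw [this]
        · have : a' = 1 := by
            rw [ha'def, min_eq_left (by linarith), max_eq_right (by norm_num)]
          rw [this]
          rw [abs_of_nonneg (by linarith [ht.2]), abs_of_nonneg (by linarith [ht.2])]
          linarith
    have h2 : 0 < |a' - t| := abs_pos.mpr (sub_ne_zero.mpr (Ne.symm htne))
    exact Real.rpow_le_rpow_of_nonpos h2 h1 hγ0.le
  refine step1.trans ?_
  have ⟨hint, hbd⟩ := core_bound hγ1 hγ0 ha'
  have hnn : 0 ≤ᵐ[um] fun t => |a' - t| ^ γ := by
    filter_upwards with t; positivity
  rw [um, show (volume.restrict (Set.Icc (0:ℝ) 1)) = volume.restrict (Set.Icc (0:ℝ) 1) from rfl]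
  rw [← ofReal_integral_eq_lintegral_ofReal hint hnn]
  exact ENNReal.ofReal_le_ofReal hbd

section Ind

variable {k : ℕ} [NeZero k]

noncomputable def AA (γ : ℝ) (j : Fin k) : (Fin k → ℝ) → ENNReal :=
  fun x => ENNReal.ofReal (|x j - x (j + 1)| ^ γ)

lemma AA_meas (γ : ℝ) (j : Fin k) : Measurable (AA γ j) := by
  unfold AA
  exact Measurable.ennreal_ofReal
    (((measurable_pi_apply j).sub (measurable_pi_apply (j + 1))).abs.pow measurable_const)

lemma fin_mk_add_one (hk : 2 ≤ k) {n : ℕ} (h : n + 1 < k) :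
    (⟨n, by omega⟩ : Fin k) + 1 = ⟨n + 1, h⟩ := by
  apply Fin.ext
  show ((⟨n, by omega⟩ : Fin k) + 1).val = n + 1
  rw [Fin.val_add, Fin.val_one', Nat.mod_eq_of_lt (show 1 < k by omega),
    Nat.mod_eq_of_lt h]

lemma ind (hk : 2 ≤ k) {γ : ℝ} (hγ1 : -1 < γ) (hγ0 : γ < 0) :
    ∀ n, n ≤ k - 1 → ∀ c : Fin k,
      ∫⁻ x, ∏ j ∈ Finset.univ.filter (fun r : Fin k => (r : ℕ) < n), AA γ (j + c) x
          ∂(Measure.pi fun _ : Fin k => um)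
        ≤ ENNReal.ofReal (2 / (γ + 1)) ^ n := by
  set C := ENNReal.ofReal (2 / (γ + 1)) with hCdef
  have hC : C ≠ ⊤ := ENNReal.ofReal_ne_top
  intro n
  induction n with
  | zero =>
    intro _ c
    have : Finset.univ.filter (fun r : Fin k => (r : ℕ) < 0) = ∅ := by
      apply Finset.filter_false_of_mem; intro r _; omega
    simp [this]
  | succ n IH =>
    intro hn c
    set jn : Fin k := ⟨n, by omega⟩ with hjn
    set v : Fin k := ⟨n + 1, by omega⟩ + c with hv
    set Tn := Finset.univ.filter (fun r : Fin k => (r : ℕ) < n) with hTn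
    have hT : Finset.univ.filter (fun r : Fin k => (r : ℕ) < n + 1) = insert jn Tn := by
      ext r
      simp only [Finset.mem_filter, Finset.mem_insert, Finset.mem_univ, true_and, hTn, hjn,
        Fin.ext_iff]
      omega
    have hjnTn : jn ∉ Tn := by simp [hTn, hjn]
    set f := fun x : Fin k → ℝ =>
      ∏ j ∈ Finset.univ.filter (fun r : Fin k => (r : ℕ) < n + 1), AA γ (j + c) x with hf
    set g := fun x : Fin k → ℝ => C * ∏ j ∈ Tn, AA γ (j + c) x with hg
    have hfm : Measurable f := Finset.measurable_prod _ (fun j _ => AA_meas _ _)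
    have hPm : Measurable (fun x : Fin k → ℝ => ∏ j ∈ Tn, AA γ (j + c) x) :=
      Finset.measurable_prod _ (fun j _ => AA_meas _ _)
    have hgm : Measurable g := hPm.const_mul C
    -- key index facts
    have hjn1 : jn + 1 = (⟨n + 1, by omega⟩ : Fin k) := fin_mk_add_one hk (by omega)
    have h1 : jn + c ≠ v := by
      rw [hv]; intro h
      have h' := add_right_cancel h
      have hval : (n : ℕ) = n + 1 := congrArg Fin.val h'
      omega
    have h2 : (jn + c) + 1 = v := by
      rw [add_right_comm, hjn1, hv]
    have hinv : ∀ (x : Fin k → ℝ) t (j : Fin k), j ∈ Tn →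
        AA γ (j + c) (Function.update x v t) = AA γ (j + c) x := by
      intro x t j hj
      rw [hTn, Finset.mem_filter] at hj
      have hjlt : (j : ℕ) < n := hj.2
      have hj1 : j + c ≠ v := by
        rw [hv]; intro h
        have h' := add_right_cancel h
        have hval : (j : ℕ) = n + 1 := congrArg Fin.val h'
        omega
      have hj2 : (j + c) + 1 ≠ v := by
        rw [add_right_comm, hv]
        intro h
        have h' := add_right_cancel h
        have hjadd : j + 1 = (⟨(j : ℕ) + 1, by omega⟩ : Fin k) :=
          fin_mk_add_one hk (by omega)
        rw [hjadd] at h'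
        have hval : (j : ℕ) + 1 = n + 1 := congrArg Fin.val h'
        omega
      simp only [AA]
      rw [Function.update_of_ne hj1, Function.update_of_ne hj2]
    have hsplit : ∀ (x : Fin k → ℝ) t, f (Function.update x v t)
        = ENNReal.ofReal (|x (jn + c) - t| ^ γ) * ∏ j ∈ Tn, AA γ (j + c) x := by
      intro x t
      show ∏ j ∈ Finset.univ.filter (fun r : Fin k => (r : ℕ) < n + 1),
        AA γ (j + c) (Function.update x v t) = _
      rw [hT, Finset.prod_insert hjnTn]
      congr 1
      · simp only [AA]
        rw [Function.update_of_ne h1, h2, Function.update_self]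
      · exact Finset.prod_congr rfl (fun j hj => hinv x t j hj)
    have hPne : ∀ x : Fin k → ℝ, (∏ j ∈ Tn, AA γ (j + c) x) ≠ ⊤ := by
      intro x
      exact (ENNReal.prod_lt_top (fun j _ => ENNReal.ofReal_lt_top)).ne
    apply le_trans (lintegral_le_of_lmarginal_le (μ := fun _ : Fin k => um) {v} hfm hgm ?_) ?_
    · -- lmarginal over {v} comparison
      rw [Pi.le_def]
      intro x
      rw [lmarginal_singleton, lmarginal_singleton]
      calc ∫⁻ t, f (Function.update x v t) ∂um
          = ∫⁻ t, ENNReal.ofReal (|x (jn + c) - t| ^ γ) * ∏ j ∈ Tn, AA γ (j + c) x ∂um := by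
            simp_rw [hsplit]
        _ = (∫⁻ t, ENNReal.ofReal (|x (jn + c) - t| ^ γ) ∂um) * ∏ j ∈ Tn, AA γ (j + c) x :=
            lintegral_mul_const' _ _ (hPne x)
        _ ≤ C * ∏ j ∈ Tn, AA γ (j + c) x :=
            mul_le_mul_left (l1 hγ1 hγ0 _) _
        _ = ∫⁻ t, g (Function.update x v t) ∂um := by
            rw [hg]
            simp only []
            rw [lintegral_congr (fun t => ?_), lintegral_const, measure_univ, mul_one]
            congr 1
            exact Finset.prod_congr rfl (fun j hj => hinv x t j hj)
    · -- conclude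
      rw [hg]
      calc ∫⁻ x, C * ∏ j ∈ Tn, AA γ (j + c) x ∂(Measure.pi fun _ : Fin k => um)
          = C * ∫⁻ x, ∏ j ∈ Tn, AA γ (j + c) x ∂(Measure.pi fun _ : Fin k => um) :=
            lintegral_const_mul' _ _ hC
        _ ≤ C * C ^ n := mul_le_mul_right (IH (by omega) c) _
        _ = C ^ (n + 1) := (pow_succ' C n).symm
end Ind

lemma amgm {k : ℕ} (hk : 2 ≤ k) {β γ : ℝ} (hγ : γ = β * k / ((k : ℝ) - 1)) (d : Fin k → ℝ) :
    ∏ j, |d j| ^ β ≤ ∑ i : Fin k, ((k : ℝ)⁻¹ * ∏ j ∈ Finset.univ.erase i, |d j| ^ γ) := by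
  have hkR : (2 : ℝ) ≤ (k : ℝ) := by exact_mod_cast hk
  have hk0 : (k : ℝ) ≠ 0 := by positivity
  have hk1 : (k : ℝ) - 1 ≠ 0 := by linarith
  have hmain := Real.geom_mean_le_arith_mean_weighted Finset.univ
    (fun _ : Fin k => (k : ℝ)⁻¹)
    (fun i : Fin k => ∏ j ∈ Finset.univ.erase i, |d j| ^ γ)
    (fun i _ => by positivity)
    (by simp [Finset.card_univ, mul_inv_cancel₀ hk0])
    (fun i _ => Finset.prod_nonneg (fun j _ => Real.rpow_nonneg (abs_nonneg _) _))
  refine le_trans (le_of_eq ?_) (hmain.trans (le_of_eq ?_))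
  · -- ∏ j |d j|^β = ∏ i (c i) ^ k⁻¹
    symm
    calc ∏ i : Fin k, (∏ j ∈ Finset.univ.erase i, |d j| ^ γ) ^ (k : ℝ)⁻¹
        = ∏ i : Fin k, ∏ j ∈ Finset.univ.erase i, (|d j| ^ γ) ^ (k : ℝ)⁻¹ := by
          refine Finset.prod_congr rfl (fun i _ => ?_)
          exact (Real.finset_prod_rpow _ _ (fun j _ => Real.rpow_nonneg (abs_nonneg _) _) _).symm
      _ = ∏ i : Fin k, ∏ j ∈ Finset.univ.erase i, |d j| ^ (γ * (k : ℝ)⁻¹) := by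
          refine Finset.prod_congr rfl (fun i _ => Finset.prod_congr rfl (fun j _ => ?_))
          rw [← Real.rpow_mul (abs_nonneg _)]
      _ = ∏ j : Fin k, ∏ i ∈ Finset.univ.erase j, |d j| ^ (γ * (k : ℝ)⁻¹) := by
          apply Finset.prod_comm'
          intro i j
          simp only [Finset.mem_erase, Finset.mem_univ, and_true, true_and]
          tauto
      _ = ∏ j : Fin k, (|d j| ^ (γ * (k : ℝ)⁻¹)) ^ (k - 1 : ℕ) := by
          refine Finset.prod_congr rfl (fun j _ => ?_)
          rw [Finset.prod_const, Finset.card_erase_of_mem (Finset.mem_univ _),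
            Finset.card_univ, Fintype.card_fin]
      _ = ∏ j : Fin k, |d j| ^ β := by
          refine Finset.prod_congr rfl (fun j _ => ?_)
          rw [← Real.rpow_natCast (|d j| ^ (γ * (k : ℝ)⁻¹)) (k - 1),
            ← Real.rpow_mul (abs_nonneg _)]
          congr 1
          have : ((k - 1 : ℕ) : ℝ) = (k : ℝ) - 1 := by
            rw [Nat.cast_sub (by omega)]; norm_num
          rw [this, hγ]
          field_simp
  · rfl

lemma box_eq (k : ℕ) :
    (volume : Measure (Fin k → ℝ)).restrict (Set.univ.pi fun _ => Set.Icc (0:ℝ) 1)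
      = Measure.pi (fun _ : Fin k => um) := by
  rw [MeasureTheory.volume_pi]
  refine (Measure.pi_eq (μ := fun _ : Fin k => um) (fun s hs => ?_)).symm
  rw [Measure.restrict_apply (MeasurableSet.univ_pi hs), ← Set.pi_inter_distrib,
    Measure.pi_pi]
  refine Finset.prod_congr rfl (fun i _ => ?_)
  rw [um, Measure.restrict_apply (hs i)]

lemma top_add_one {k : ℕ} [NeZero k] (hk : 2 ≤ k) :
    (⟨k - 1, by omega⟩ : Fin k) + 1 = 0 := by
  apply Fin.ext
  show ((⟨k - 1, by omega⟩ : Fin k) + 1).val = (0 : Fin k).val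
  rw [Fin.val_add, Fin.val_one', Nat.mod_eq_of_lt (show 1 < k by omega)]
  have h1 : k - 1 + 1 = k := by omega
  rw [h1, Nat.mod_self, Fin.val_zero]

lemma reindex {k : ℕ} [NeZero k] (hk : 2 ≤ k) (γ : ℝ) (i : Fin k) (x : Fin k → ℝ) :
    ∏ j ∈ Finset.univ.erase i, AA γ j x
      = ∏ r ∈ Finset.univ.filter (fun r : Fin k => (r : ℕ) < k - 1), AA γ (r + (i + 1)) x := by
  refine Finset.prod_nbij' (fun j => j - (i + 1)) (fun r => r + (i + 1)) ?_ ?_ ?_ ?_ ?_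
  · -- maps erase into filter
    intro a ha
    rw [Finset.mem_erase] at ha
    rw [Finset.mem_filter]
    refine ⟨Finset.mem_univ _, ?_⟩
    show (a - (i + 1) : Fin k).val < k - 1
    by_contra hlt
    have hisLt := (a - (i + 1)).isLt
    have hval : (a - (i + 1)).val = k - 1 := by omega
    have htop : a - (i + 1) = (⟨k - 1, by omega⟩ : Fin k) := Fin.ext hval
    have h0 : a - i = 0 := by
      have h1 : a - i = (a - (i + 1)) + 1 := by abel
      rw [h1, htop, top_add_one hk]
    exact ha.1 (sub_eq_zero.mp h0)
  · -- maps filter into erase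
    intro r hr
    rw [Finset.mem_filter] at hr
    rw [Finset.mem_erase]
    refine ⟨?_, Finset.mem_univ _⟩
    intro h
    have h0 : r + 1 = 0 := by
      apply add_right_cancel (b := i)
      calc (r + 1) + i = r + (i + 1) := by abel
        _ = i := h
        _ = 0 + i := by rw [zero_add]
    have hadd : r + 1 = (⟨(r : ℕ) + 1, by omega⟩ : Fin k) := fin_mk_add_one hk (by omega)
    rw [hadd] at h0
    have : (r : ℕ) + 1 = 0 := congrArg Fin.val h0
    omega
  · intro a _
    show a - (i + 1) + (i + 1) = a
    abel
  · intro r _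
    show r + (i + 1) - (i + 1) = r
    abel
  · intro a _
    have h : a - (i + 1) + (i + 1) = a := by abel
    show AA γ a x = AA γ (a - (i + 1) + (i + 1)) x
    rw [h]

theorem stmt7 (H : ℝ) (hH : H ∈ Set.Ioo (3/4 : ℝ) 1) (k : ℕ) (hk : 2 ≤ k) :
    MeasureTheory.IntegrableOn
      (fun x : Fin k → ℝ =>
        ∏ j : Fin k, |x j - x ⟨(j.val + 1) % k, Nat.mod_lt _ (by omega)⟩| ^ (2*H - 2))
      (Set.univ.pi fun _ => Set.Icc (0:ℝ) 1) := by
  obtain ⟨hH1, hH2⟩ := hH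
  haveI : NeZero k := ⟨by omega⟩
  have hkR : (2 : ℝ) ≤ (k : ℝ) := by exact_mod_cast hk
  set β : ℝ := 2 * H - 2 with hβdef
  have hβ1 : -(1/2 : ℝ) < β := by rw [hβdef]; linarith
  have hβ0 : β < 0 := by rw [hβdef]; linarith
  set γ : ℝ := β * k / ((k : ℝ) - 1) with hγdef
  have hγ0 : γ < 0 :=
    div_neg_of_neg_of_pos (mul_neg_of_neg_of_pos hβ0 (by linarith)) (by linarith)
  have hγ1 : -1 < γ := by
    rw [hγdef, lt_div_iff₀ (by linarith : (0:ℝ) < (k : ℝ) - 1)]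
    nlinarith
  have hfun : (fun x : Fin k → ℝ =>
        ∏ j : Fin k, |x j - x ⟨(j.val + 1) % k, Nat.mod_lt _ (by omega)⟩| ^ (2*H - 2))
      = fun x : Fin k → ℝ => ∏ j : Fin k, |x j - x (j + 1)| ^ β := by
    funext x
    refine Finset.prod_congr rfl (fun j _ => ?_)
    have hidx : (⟨((j : ℕ) + 1) % k, Nat.mod_lt _ (by omega)⟩ : Fin k) = j + 1 := by
      apply Fin.ext
      show ((j : ℕ) + 1) % k = (j + 1 : Fin k).val
      rw [Fin.val_add, Fin.val_one', Nat.mod_eq_of_lt (show 1 < k by omega)]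
    rw [hidx]
  rw [hfun]
  have hmeas : Measurable (fun x : Fin k → ℝ => ∏ j : Fin k, |x j - x (j + 1)| ^ β) :=
    Finset.measurable_prod _ (fun j _ =>
      ((measurable_pi_apply j).sub (measurable_pi_apply (j + 1))).abs.pow measurable_const)
  rw [IntegrableOn, box_eq k]
  have hnn : ∀ x : Fin k → ℝ, 0 ≤ ∏ j : Fin k, |x j - x (j + 1)| ^ β :=
    fun x => Finset.prod_nonneg (fun j _ => Real.rpow_nonneg (abs_nonneg _) _)
  refine ⟨hmeas.aestronglyMeasurable, ?_⟩
  rw [hasFiniteIntegral_iff_ofReal (Filter.Eventually.of_forall hnn)]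
  set C := ENNReal.ofReal (2 / (γ + 1)) with hCdef
  calc ∫⁻ x, ENNReal.ofReal (∏ j : Fin k, |x j - x (j + 1)| ^ β)
          ∂(Measure.pi fun _ : Fin k => um)
      ≤ ∫⁻ x, ∑ i : Fin k,
          ENNReal.ofReal ((k : ℝ)⁻¹ * ∏ j ∈ Finset.univ.erase i, |x j - x (j + 1)| ^ γ)
          ∂(Measure.pi fun _ : Fin k => um) := by
        apply lintegral_mono
        intro x
        refine le_trans (ENNReal.ofReal_le_ofReal
          (amgm hk hγdef (fun j => x j - x (j + 1)))) ?_
        rw [ENNReal.ofReal_sum_of_nonneg (fun i _ => ?_)]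
        positivity
    _ = ∑ i : Fin k, ∫⁻ x,
          ENNReal.ofReal ((k : ℝ)⁻¹ * ∏ j ∈ Finset.univ.erase i, |x j - x (j + 1)| ^ γ)
          ∂(Measure.pi fun _ : Fin k => um) := by
        apply lintegral_finset_sum
        intro i _
        exact Measurable.ennreal_ofReal (measurable_const.mul
          (Finset.measurable_prod _ (fun j _ =>
            ((measurable_pi_apply j).sub (measurable_pi_apply (j + 1))).abs.pow
              measurable_const)))
    _ ≤ ∑ _i : Fin k, C ^ (k - 1) := by
        apply Finset.sum_le_sum
        intro i _
        have heq : ∀ x : Fin k → ℝ,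
            ENNReal.ofReal ((k : ℝ)⁻¹ * ∏ j ∈ Finset.univ.erase i, |x j - x (j + 1)| ^ γ)
              = ENNReal.ofReal ((k : ℝ)⁻¹) * ∏ j ∈ Finset.univ.erase i, AA γ j x := by
          intro x
          rw [ENNReal.ofReal_mul (by positivity)]
          congr 1
          rw [ENNReal.ofReal_prod_of_nonneg
            (fun j _ => Real.rpow_nonneg (abs_nonneg _) _)]
          rfl
        simp_rw [heq]
        rw [lintegral_const_mul' _ _ ENNReal.ofReal_ne_top]
        have hre : ∀ x : Fin k → ℝ, ∏ j ∈ Finset.univ.erase i, AA γ j x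
            = ∏ r ∈ Finset.univ.filter (fun r : Fin k => (r : ℕ) < k - 1),
                AA γ (r + (i + 1)) x := fun x => reindex hk γ i x
        simp_rw [hre]
        refine le_trans (mul_le_mul_right
          (ind hk hγ1 hγ0 (k - 1) le_rfl (i + 1)) _) ?_
        refine le_trans (mul_le_mul_left (ENNReal.ofReal_le_one.mpr ?_) _) ?_
        · rw [inv_le_one_iff₀]; right; linarith
        · rw [one_mul]
    _ < ⊤ := by
        apply ENNReal.sum_lt_top.mpr
        intro i _
        exact ENNReal.pow_lt_top ENNReal.ofReal_lt_top
end

section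
/- Let g : [0,1] → ℝ be m-times continuously differentiable with g and all derivatives extended by 0 outside [0,1] (i.e., g is C^m and supported in [0,1] with ∫₀¹ t^p g(t) dt permitted arbitrary). Then for every integer a ≥ 1, |(1/a)Σ_{k=0}^{a-1} g(k/a) - ∫₀¹ g(t) dt| ≤ sup_{t∈[0,1]} |g^{(m)}(t)| · a^{-m}. -/
open MeasureTheory intervalIntegral

/-- The kernel polynomials: `phiK 0 x = 1 - x`,
`phiK (j+1) x = ∫ s in 0..x, (phiK j s - ∫ u in 0..1, phiK j u)`. -/
noncomputable def phiK : ℕ → ℝ → ℝ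
  | 0 => fun x => 1 - x
  | (j+1) => fun x => ∫ s in (0:ℝ)..x, (phiK j s - ∫ u in (0:ℝ)..1, phiK j u)

noncomputable def cK (j : ℕ) : ℝ := ∫ u in (0:ℝ)..1, phiK j u

lemma phiK_succ (j : ℕ) (x : ℝ) :
    phiK (j+1) x = ∫ s in (0:ℝ)..x, (phiK j s - cK j) := rfl

lemma phiK_cont : ∀ j, Continuous (phiK j) := by
  intro j
  induction j with
  | zero => exact continuous_const.sub continuous_id
  | succ j ih =>
    have h : ∀ x : ℝ, HasDerivAt (phiK (j+1)) (phiK j x - cK j) x := by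
      intro x
      have hint : IntervalIntegrable (fun s => phiK j s - cK j) volume 0 x :=
        (ih.sub continuous_const).intervalIntegrable _ _
      exact intervalIntegral.integral_hasDerivAt_right hint
        ((ih.sub continuous_const).aestronglyMeasurable.stronglyMeasurableAtFilter)
        ((ih.sub continuous_const).continuousAt)
    exact continuous_iff_continuousAt.mpr fun x => (h x).continuousAt

lemma phiK_hasDerivAt (j : ℕ) (x : ℝ) :
    HasDerivAt (phiK (j+1)) (phiK j x - cK j) x := by
  have ih := phiK_cont j
  have hint : IntervalIntegrable (fun s => phiK j s - cK j) volume 0 x :=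
    (ih.sub continuous_const).intervalIntegrable _ _
  exact intervalIntegral.integral_hasDerivAt_right hint
    ((ih.sub continuous_const).aestronglyMeasurable.stronglyMeasurableAtFilter)
    ((ih.sub continuous_const).continuousAt)

lemma phiK_zero_eval (j : ℕ) : phiK (j+1) 0 = 0 := by
  simp [phiK_succ]

lemma phiK_one_eval (j : ℕ) : phiK (j+1) 1 = 0 := by
  rw [phiK_succ]
  have h1 : IntervalIntegrable (phiK j) volume 0 1 :=
    (phiK_cont j).intervalIntegrable _ _
  rw [intervalIntegral.integral_sub h1 (intervalIntegrable_const)]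
  simp [cK]

/-- Boundedness invariant for the kernels. -/
lemma phiK_invariant : ∀ j, (∀ x ∈ Set.Icc (0:ℝ) 1, |phiK j x| ≤ 1) ∧
    (∫ x in (0:ℝ)..1, |phiK j x - cK j|) ≤ 1/2 := by
  intro j
  induction j with
  | zero =>
    constructor
    · intro x hx
      simp only [phiK]
      rw [abs_le]
      constructor <;> [linarith [hx.2]; linarith [hx.1]]
    · have hc : cK 0 = 1/2 := by
        simp only [cK, phiK]
        rw [intervalIntegral.integral_sub intervalIntegrable_const
          (intervalIntegral.intervalIntegrable_id), integral_id,
          intervalIntegral.integral_const]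
        norm_num
      have hb : ∀ x ∈ Set.Icc (0:ℝ) 1, |phiK 0 x - cK 0| ≤ 1/2 := by
        intro x hx
        simp only [phiK, hc]
        rw [abs_le]
        constructor <;> [linarith [hx.2]; linarith [hx.1]]
      calc (∫ x in (0:ℝ)..1, |phiK 0 x - cK 0|)
          ≤ ∫ _x in (0:ℝ)..1, (1/2 : ℝ) := by
            apply intervalIntegral.integral_mono_on (by norm_num)
            · exact (((phiK_cont 0).sub continuous_const).abs).intervalIntegrable _ _
            · exact intervalIntegrable_const
            · exact hb
        _ = 1/2 := by simp
  | succ j ih =>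
    obtain ⟨ihM, ihL⟩ := ih
    have hcont : Continuous fun s => phiK j s - cK j := (phiK_cont j).sub continuous_const
    have habs : Continuous fun s => |phiK j s - cK j| := hcont.abs
    -- pointwise bound ≤ 1/4
    have hM : ∀ x ∈ Set.Icc (0:ℝ) 1, |phiK (j+1) x| ≤ 1/4 := by
      intro x hx
      have h1 : |phiK (j+1) x| ≤ ∫ s in (0:ℝ)..x, |phiK j s - cK j| := by
        rw [phiK_succ]
        exact intervalIntegral.abs_integral_le_integral_abs hx.1
      have h2 : |phiK (j+1) x| ≤ ∫ s in x..1, |phiK j s - cK j| := by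
        have hsplit : (∫ s in (0:ℝ)..x, (phiK j s - cK j)) + ∫ s in x..(1:ℝ), (phiK j s - cK j)
            = ∫ s in (0:ℝ)..1, (phiK j s - cK j) :=
          intervalIntegral.integral_add_adjacent_intervals
            (hcont.intervalIntegrable _ _) (hcont.intervalIntegrable _ _)
        have htot : (∫ s in (0:ℝ)..1, (phiK j s - cK j)) = 0 := by
          rw [intervalIntegral.integral_sub ((phiK_cont j).intervalIntegrable _ _)
            intervalIntegrable_const]
          simp [cK]
        have : phiK (j+1) x = -∫ s in x..(1:ℝ), (phiK j s - cK j) := by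
          rw [phiK_succ]; linarith [hsplit, htot]
        rw [this, abs_neg]
        exact intervalIntegral.abs_integral_le_integral_abs hx.2
      have hsplitabs : (∫ s in (0:ℝ)..x, |phiK j s - cK j|) + ∫ s in x..(1:ℝ), |phiK j s - cK j|
          = ∫ s in (0:ℝ)..1, |phiK j s - cK j| :=
        intervalIntegral.integral_add_adjacent_intervals
          (habs.intervalIntegrable _ _) (habs.intervalIntegrable _ _)
      linarith
    constructor
    · intro x hx; linarith [hM x hx]
    · -- L bound
      have hc : |cK (j+1)| ≤ 1/4 := by
        have : |cK (j+1)| ≤ ∫ s in (0:ℝ)..1, |phiK (j+1) s| :=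
          intervalIntegral.abs_integral_le_integral_abs (by norm_num)
        have h2 : (∫ s in (0:ℝ)..1, |phiK (j+1) s|) ≤ ∫ _s in (0:ℝ)..1, (1/4:ℝ) := by
          apply intervalIntegral.integral_mono_on (by norm_num)
          · exact ((phiK_cont (j+1)).abs).intervalIntegrable _ _
          · exact intervalIntegrable_const
          · exact hM
        simp only [intervalIntegral.integral_const, smul_eq_mul, sub_zero, mul_one, one_mul] at h2
        linarith
      calc (∫ x in (0:ℝ)..1, |phiK (j+1) x - cK (j+1)|)
          ≤ ∫ _x in (0:ℝ)..1, (1/2:ℝ) := by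
            apply intervalIntegral.integral_mono_on (by norm_num)
            · exact (((phiK_cont (j+1)).sub continuous_const).abs).intervalIntegrable _ _
            · exact intervalIntegrable_const
            · intro x hx
              calc |phiK (j+1) x - cK (j+1)| ≤ |phiK (j+1) x| + |cK (j+1)| := abs_sub _ _
                _ ≤ 1/4 + 1/4 := add_le_add (hM x hx) hc
                _ = 1/2 := by norm_num
        _ = 1/2 := by simp

lemma phiK_bound (j : ℕ) (x : ℝ) (hx : x ∈ Set.Icc (0:ℝ) 1) : |phiK j x| ≤ 1 :=
  (phiK_invariant j).1 x hx

theorem stmt10 (m : ℕ) (hm : 1 ≤ m) (g : ℝ → ℝ) (hg : ContDiff ℝ (m : ℕ∞) g)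
    (hsupp : Function.support g ⊆ Set.Icc 0 1) (a : ℕ) (ha : 1 ≤ a) :
    |(1 / (a:ℝ)) * ∑ k ∈ Finset.range a, g ((k:ℝ) / a) - ∫ t in (0:ℝ)..1, g t|
      ≤ (⨆ t : Set.Icc (0:ℝ) 1, |iteratedDeriv m g t|) * ((a:ℝ) ^ m)⁻¹ := by
  have haR : (0:ℝ) < a := by exact_mod_cast ha
  have haR' : (a:ℝ) ≠ 0 := ne_of_gt haR
  set nd : ℕ → ℝ := fun k => (k:ℝ)/a with hnd
  set G : ℕ → ℝ → ℝ := fun j => iteratedDeriv j g with hG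
  -- continuity of derivatives
  have F1 : ∀ j, j ≤ m → Continuous (G j) := by
    intro j hj
    exact hg.continuous_iteratedDeriv j (by exact_mod_cast hj)
  -- derivatives
  have F2 : ∀ j, j < m → ∀ x : ℝ, HasDerivAt (G j) (G (j+1) x) x := by
    intro j hj x
    have hd : DifferentiableAt ℝ (G j) x :=
      (hg.differentiable_iteratedDeriv j (by exact_mod_cast hj)).differentiableAt
    have := hd.hasDerivAt
    rwa [show G (j+1) x = deriv (G j) x by simp only [hG]; rw [iteratedDeriv_succ]]
  -- vanishing outside the interval
  have hzero : ∀ j, iteratedDeriv j (fun _ : ℝ => (0:ℝ)) = fun _ => 0 := by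
    intro j
    induction j with
    | zero => simp [iteratedDeriv_zero]
    | succ j ih => rw [iteratedDeriv_succ, ih]; funext x; simp
  have hvout : ∀ j, ∀ x : ℝ, (x < 0 ∨ 1 < x) → G j x = 0 := by
    intro j x hx
    have hopen : IsOpen {y : ℝ | y < 0 ∨ 1 < y} := (isOpen_Iio.union isOpen_Ioi)
    have hmem : {y : ℝ | y < 0 ∨ 1 < y} ∈ nhds x := hopen.mem_nhds hx
    have heq : g =ᶠ[nhds x] (fun _ => (0:ℝ)) := by
      filter_upwards [hmem] with y hy
      by_contra hgy
      have : y ∈ Set.Icc (0:ℝ) 1 := hsupp hgy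
      rcases hy with h1 | h1
      · exact absurd this.1 (not_le.mpr h1)
      · exact absurd this.2 (not_le.mpr h1)
    have := heq.iteratedDeriv_eq j
    simp only [hG]
    rw [this, hzero j]
  have F3 : ∀ j, j ≤ m → G j 0 = 0 ∧ G j 1 = 0 := by
    intro j hj
    have hcj := F1 j hj
    constructor
    · have h0 : Set.EqOn (G j) (fun _ => (0:ℝ)) (Set.Iio 0) := fun x hx =>
        hvout j x (Or.inl hx)
      have := h0.closure hcj continuous_const
      have h0mem : (0:ℝ) ∈ closure (Set.Iio (0:ℝ)) := by
        rw [closure_Iio]; exact Set.self_mem_Iic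
      exact this h0mem
    · have h0 : Set.EqOn (G j) (fun _ => (0:ℝ)) (Set.Ioi 1) := fun x hx =>
        hvout j x (Or.inr hx)
      have := h0.closure hcj continuous_const
      have h1mem : (1:ℝ) ∈ closure (Set.Ioi (1:ℝ)) := by
        rw [closure_Ioi]; exact Set.self_mem_Ici
      exact this h1mem
  have F4 : ∀ j, j + 1 ≤ m → (∫ t in (0:ℝ)..1, G (j+1) t) = 0 := by
    intro j hj
    have := intervalIntegral.integral_eq_sub_of_hasDerivAt
      (f := G j) (f' := G (j+1)) (a := (0:ℝ)) (b := 1)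
      (fun x _ => F2 j (by omega) x)
      ((F1 (j+1) hj).intervalIntegrable _ _)
    rw [this, (F3 j (by omega)).2, (F3 j (by omega)).1, sub_zero]
  -- node facts
  have nd0 : nd 0 = 0 := by simp [hnd]
  have nda : nd a = 1 := by simp only [hnd]; exact div_self haR'
  have ndk0 : ∀ k : ℕ, (a:ℝ) * nd k - k = 0 := by
    intro k; simp only [hnd]; have : (a:ℝ) * ((k:ℝ)/a) = k := by field_simp
    linarith
  have ndk1 : ∀ k : ℕ, (a:ℝ) * nd (k+1) - k = 1 := by
    intro k; rw [hnd]; push_cast; field_simp; ring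
  have ndlt : ∀ k : ℕ, nd k ≤ nd (k+1) := by
    intro k; rw [hnd]
    rw [div_le_div_iff₀ haR haR]
    push_cast; nlinarith
  have ndIcc : ∀ k : ℕ, k < a → ∀ t ∈ Set.uIcc (nd k) (nd (k+1)),
      (t ∈ Set.Icc (0:ℝ) 1 ∧ (a:ℝ)*t - k ∈ Set.Icc (0:ℝ) 1) := by
    intro k hk t ht
    rw [Set.uIcc_of_le (ndlt k)] at ht
    have h1 : (0:ℝ) ≤ nd k := by positivity
    have h2 : nd (k+1) ≤ 1 := by
      rw [hnd]
      rw [div_le_one haR]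
      have : (k:ℝ)+1 ≤ (a:ℝ) := by exact_mod_cast Nat.succ_le_of_lt hk
      push_cast; linarith
    have hklo : (k:ℝ)/a ≤ t := ht.1
    have hkhi : t ≤ ((k:ℝ)+1)/a := by
      have := ht.2; rw [hnd] at this; push_cast at this; exact this
    constructor
    · exact ⟨le_trans h1 ht.1, le_trans ht.2 h2⟩
    · constructor
      · have : (k:ℝ) ≤ (a:ℝ) * t := by
          rw [div_le_iff₀ haR] at hklo; linarith [hklo]
        linarith
      · have : (a:ℝ) * t ≤ (k:ℝ) + 1 := by
          rw [le_div_iff₀ haR] at hkhi; linarith [hkhi]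
        linarith
  set S : ℕ → ℝ := fun i => ∑ k ∈ Finset.range a,
    ∫ t in nd k..nd (k+1), phiK i ((a:ℝ)*t - (k:ℝ)) * G (i+1) t with hS
  have hlin : ∀ k : ℕ, Continuous (fun t : ℝ => (a:ℝ)*t - (k:ℝ)) :=
    fun k => (continuous_const.mul continuous_id).sub continuous_const
  have hSint : ∀ i (k : ℕ), i+1 ≤ m →
      Continuous (fun t => phiK i ((a:ℝ)*t - (k:ℝ)) * G (i+1) t) := by
    intro i k hi
    exact ((phiK_cont i).comp (hlin k)).mul (F1 (i+1) hi)
  have hinner : ∀ (k : ℕ) (t : ℝ), HasDerivAt (fun t : ℝ => (a:ℝ)*t - (k:ℝ)) (a:ℝ) t := by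
    intro k t
    simpa using ((hasDerivAt_id t).const_mul (a:ℝ)).sub_const (k:ℝ)
  have key : ∀ i, i + 1 ≤ m →
      (∫ t in (0:ℝ)..1, g t) - (1/(a:ℝ)) * ∑ k ∈ Finset.range a, g ((k:ℝ)/a)
        = (-1:ℝ)^i * ((a:ℝ)⁻¹)^(i+1) * S i := by
    intro i
    induction i with
    | zero =>
      intro hi
      have parts_k : ∀ k, k < a → (∫ t in nd k..nd (k+1), g t)
          = (a:ℝ)⁻¹ * g (nd k)
            + (a:ℝ)⁻¹ * ∫ t in nd k..nd (k+1), phiK 0 ((a:ℝ)*t - (k:ℝ)) * G 1 t := by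
        intro k hk
        have hu : ∀ t ∈ Set.uIcc (nd k) (nd (k+1)),
            HasDerivAt (fun t => (a:ℝ)⁻¹ * phiK 0 ((a:ℝ)*t - (k:ℝ))) (-1 : ℝ) t := by
          intro t _
          have h0 : HasDerivAt (phiK 0) (-1:ℝ) ((a:ℝ)*t - (k:ℝ)) := by
            have : HasDerivAt (fun x : ℝ => 1 - x) (-1:ℝ) ((a:ℝ)*t - (k:ℝ)) := by
              simpa using (hasDerivAt_id ((a:ℝ)*t - (k:ℝ))).const_sub (1:ℝ)
            exact this
          have h2 := (h0.comp t (hinner k t)).const_mul ((a:ℝ)⁻¹)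
          refine h2.congr_deriv ?_
          field_simp
        have hv : ∀ t ∈ Set.uIcc (nd k) (nd (k+1)), HasDerivAt g (G 1 t) t := by
          intro t _
          have h2 := F2 0 (by omega) t
          have hg0 : G 0 = g := by simp only [hG]; exact iteratedDeriv_zero
          rwa [hg0] at h2
        have hparts := intervalIntegral.integral_mul_deriv_eq_deriv_mul hu hv
          (intervalIntegrable_const) ((F1 1 hm).intervalIntegrable _ _)
        rw [ndk1 k, ndk0 k] at hparts
        have hphi1 : phiK 0 (1:ℝ) = 0 := by norm_num [phiK]
        have hphi0 : phiK 0 (0:ℝ) = 1 := by norm_num [phiK]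
        rw [hphi1, hphi0] at hparts
        simp only [mul_zero, zero_mul, mul_one, neg_one_mul] at hparts
        rw [intervalIntegral.integral_neg] at hparts
        have hpull : (∫ t in nd k..nd (k+1), ((a:ℝ)⁻¹ * phiK 0 ((a:ℝ)*t - (k:ℝ))) * G 1 t)
            = (a:ℝ)⁻¹ * ∫ t in nd k..nd (k+1), phiK 0 ((a:ℝ)*t - (k:ℝ)) * G 1 t := by
          simp only [mul_assoc]
          exact intervalIntegral.integral_const_mul _ _
        rw [hpull] at hparts
        linarith [hparts]
      have hsum : (∑ k ∈ Finset.range a, ∫ t in nd k..nd (k+1), g t)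
          = ∫ t in (0:ℝ)..1, g t := by
        have := intervalIntegral.sum_integral_adjacent_intervals (μ := volume)
          (a := nd) (n := a) (f := g)
          (fun k _ => (hg.continuous).intervalIntegrable _ _)
        rwa [nd0, nda] at this
      have hsplit : (∑ k ∈ Finset.range a, ∫ t in nd k..nd (k+1), g t)
          = ∑ k ∈ Finset.range a, ((a:ℝ)⁻¹ * g (nd k)
            + (a:ℝ)⁻¹ * ∫ t in nd k..nd (k+1), phiK 0 ((a:ℝ)*t - (k:ℝ)) * G 1 t) :=
        Finset.sum_congr rfl (fun k hk => parts_k k (Finset.mem_range.mp hk))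
      rw [← hsum, hsplit, Finset.sum_add_distrib, ← Finset.mul_sum, ← Finset.mul_sum]
      simp only [hS, hnd, pow_zero, pow_one, one_mul, one_div]
      ring
    | succ i IH =>
      intro hi
      have hi1 : i + 1 ≤ m := by omega
      have parts_k : ∀ k, k < a →
          (∫ t in nd k..nd (k+1), phiK i ((a:ℝ)*t - (k:ℝ)) * G (i+1) t)
          = cK i * (∫ t in nd k..nd (k+1), G (i+1) t)
            - (a:ℝ)⁻¹ * ∫ t in nd k..nd (k+1), phiK (i+1) ((a:ℝ)*t - (k:ℝ)) * G (i+2) t := by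
        intro k hk
        have hu : ∀ t ∈ Set.uIcc (nd k) (nd (k+1)),
            HasDerivAt (fun t => (a:ℝ)⁻¹ * phiK (i+1) ((a:ℝ)*t - (k:ℝ)))
              (phiK i ((a:ℝ)*t - (k:ℝ)) - cK i) t := by
          intro t _
          have h2 := ((phiK_hasDerivAt i ((a:ℝ)*t - (k:ℝ))).comp t (hinner k t)).const_mul
            ((a:ℝ)⁻¹)
          refine h2.congr_deriv ?_
          field_simp
        have hv : ∀ t ∈ Set.uIcc (nd k) (nd (k+1)),
            HasDerivAt (G (i+1)) (G (i+2) t) t := fun t _ => F2 (i+1) (by omega) t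
        have hu' : IntervalIntegrable (fun t => phiK i ((a:ℝ)*t - (k:ℝ)) - cK i)
            volume (nd k) (nd (k+1)) :=
          (((phiK_cont i).comp (hlin k)).sub continuous_const).intervalIntegrable _ _
        have hparts := intervalIntegral.integral_mul_deriv_eq_deriv_mul hu hv
          hu' ((F1 (i+2) hi).intervalIntegrable _ _)
        rw [ndk1 k, ndk0 k, phiK_one_eval, phiK_zero_eval] at hparts
        simp only [mul_zero, zero_mul, sub_zero, zero_sub] at hparts
        have hpull : (∫ t in nd k..nd (k+1),
              ((a:ℝ)⁻¹ * phiK (i+1) ((a:ℝ)*t - (k:ℝ))) * G (i+2) t)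
            = (a:ℝ)⁻¹ * ∫ t in nd k..nd (k+1), phiK (i+1) ((a:ℝ)*t - (k:ℝ)) * G (i+2) t := by
          simp only [mul_assoc]
          exact intervalIntegral.integral_const_mul _ _
        rw [hpull] at hparts
        -- hparts : ∫ (phiK i (..) - cK i) * G (i+1) = - ((a)⁻¹ * ∫ phiK (i+1) .. * G (i+2))
        have hsub : (∫ t in nd k..nd (k+1), (phiK i ((a:ℝ)*t - (k:ℝ)) - cK i) * G (i+1) t)
            = (∫ t in nd k..nd (k+1), phiK i ((a:ℝ)*t - (k:ℝ)) * G (i+1) t)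
              - cK i * ∫ t in nd k..nd (k+1), G (i+1) t := by
          have h1 : IntervalIntegrable (fun t => phiK i ((a:ℝ)*t - (k:ℝ)) * G (i+1) t)
              volume (nd k) (nd (k+1)) := (hSint i k hi1).intervalIntegrable _ _
          have h2 : IntervalIntegrable (fun t => cK i * G (i+1) t)
              volume (nd k) (nd (k+1)) :=
            (continuous_const.mul (F1 (i+1) hi1)).intervalIntegrable _ _
          rw [← intervalIntegral.integral_const_mul, ← intervalIntegral.integral_sub h1 h2]
          congr 1; funext t; ring
        rw [hsub] at hparts
        linarith [hparts]
      have hsumG : (∑ k ∈ Finset.range a, ∫ t in nd k..nd (k+1), G (i+1) t)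
          = ∫ t in (0:ℝ)..1, G (i+1) t := by
        have := intervalIntegral.sum_integral_adjacent_intervals (μ := volume)
          (a := nd) (n := a) (f := G (i+1))
          (fun k _ => (F1 (i+1) hi1).intervalIntegrable _ _)
        rwa [nd0, nda] at this
      have hstep : S i = -((a:ℝ)⁻¹) * S (i+1) := by
        rw [hS]
        simp only []
        calc (∑ k ∈ Finset.range a,
              ∫ t in nd k..nd (k+1), phiK i ((a:ℝ)*t - (k:ℝ)) * G (i+1) t)
            = ∑ k ∈ Finset.range a, (cK i * (∫ t in nd k..nd (k+1), G (i+1) t)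
              - (a:ℝ)⁻¹ * ∫ t in nd k..nd (k+1), phiK (i+1) ((a:ℝ)*t - (k:ℝ)) * G (i+2) t) :=
              Finset.sum_congr rfl (fun k hk => parts_k k (Finset.mem_range.mp hk))
          _ = cK i * (∑ k ∈ Finset.range a, ∫ t in nd k..nd (k+1), G (i+1) t)
              - (a:ℝ)⁻¹ * ∑ k ∈ Finset.range a,
                ∫ t in nd k..nd (k+1), phiK (i+1) ((a:ℝ)*t - (k:ℝ)) * G (i+2) t := by
              rw [Finset.sum_sub_distrib, ← Finset.mul_sum, ← Finset.mul_sum]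
          _ = -((a:ℝ)⁻¹) * ∑ k ∈ Finset.range a,
                ∫ t in nd k..nd (k+1), phiK (i+1) ((a:ℝ)*t - (k:ℝ)) * G (i+2) t := by
              rw [hsumG, F4 i hi1]
              ring
      rw [IH hi1, hstep]
      ring
  -- final assembly
  obtain ⟨n, rfl⟩ : ∃ n, m = n + 1 := ⟨m - 1, (Nat.succ_pred_eq_of_pos hm).symm⟩
  have hkey := key n le_rfl
  set C : ℝ := ⨆ t : Set.Icc (0:ℝ) 1, |iteratedDeriv (n+1) g t| with hCdef
  have hbdd : BddAbove (Set.range fun t : Set.Icc (0:ℝ) 1 => |iteratedDeriv (n+1) g t|) := by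
    have h1 : ContinuousOn (fun t => |iteratedDeriv (n+1) g t|) (Set.Icc 0 1) :=
      ((F1 (n+1) le_rfl).abs).continuousOn
    have h2 := isCompact_Icc.bddAbove_image h1
    rwa [Set.image_eq_range] at h2
  have hC : ∀ t ∈ Set.Icc (0:ℝ) 1, |iteratedDeriv (n+1) g t| ≤ C := by
    intro t ht
    exact le_ciSup hbdd ⟨t, ht⟩
  have hC0 : 0 ≤ C := le_trans (abs_nonneg _) (hC 0 (by norm_num))
  -- bound each interval integral
  have hterm : ∀ k, k < a →
      |∫ t in nd k..nd (k+1), phiK n ((a:ℝ)*t - (k:ℝ)) * G (n+1) t| ≤ C * (a:ℝ)⁻¹ := by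
    intro k hk
    have hb : ∀ x ∈ Set.uIoc (nd k) (nd (k+1)),
        ‖phiK n ((a:ℝ)*x - (k:ℝ)) * G (n+1) x‖ ≤ C := by
      intro x hx
      have hx' : x ∈ Set.uIcc (nd k) (nd (k+1)) := by
        rw [Set.uIoc_of_le (ndlt k)] at hx
        rw [Set.uIcc_of_le (ndlt k)]
        exact Set.Ioc_subset_Icc_self hx
      obtain ⟨hx1, hx2⟩ := ndIcc k hk x hx'
      rw [Real.norm_eq_abs, abs_mul]
      calc |phiK n ((a:ℝ)*x - (k:ℝ))| * |G (n+1) x| ≤ 1 * C := by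
            apply mul_le_mul (phiK_bound n _ hx2) (hC x hx1) (abs_nonneg _) zero_le_one
        _ = C := one_mul C
    have hlen : |nd (k+1) - nd k| = (a:ℝ)⁻¹ := by
      rw [hnd]
      push_cast
      rw [abs_of_nonneg]
      · field_simp; ring
      · have := ndlt k
        rw [hnd] at this; push_cast at this; linarith
    have := intervalIntegral.norm_integral_le_of_norm_le_const hb
    rw [Real.norm_eq_abs] at this
    rw [hlen] at this
    exact this
  have hSbound : |S n| ≤ C := by
    have h1 : |S n| ≤ ∑ k ∈ Finset.range a, (C * (a:ℝ)⁻¹) := by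
      rw [hS]
      refine (Finset.abs_sum_le_sum_abs _ _).trans ?_
      exact Finset.sum_le_sum (fun k hk => hterm k (Finset.mem_range.mp hk))
    rw [Finset.sum_const, Finset.card_range, nsmul_eq_mul] at h1
    calc |S n| ≤ (a:ℝ) * (C * (a:ℝ)⁻¹) := h1
      _ = C := by field_simp
  rw [abs_sub_comm, hkey, abs_mul, abs_mul, abs_pow, abs_pow, abs_neg, abs_one, one_pow,
    one_mul, abs_of_nonneg (inv_nonneg.mpr haR.le)]
  calc ((a:ℝ)⁻¹)^(n+1) * |S n| ≤ ((a:ℝ)⁻¹)^(n+1) * C := by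
        apply mul_le_mul_of_nonneg_left hSbound (by positivity)
    _ = C * ((a:ℝ)^(n+1))⁻¹ := by rw [inv_pow]; ring
end

section
/- Let ψ : ℝ → ℝ be continuous with support in [0,1] and Q ≥ 1 vanishing moments (∫₀¹ t^p ψ(t) dt = 0 for p = 0,…,Q-1), and assume ψ is Q-times continuously differentiable on [0,1]. Then there is a constant C (depending on H, Q, ψ) such that for every integer i ≥ 1, |∫₀¹ ψ(t)(i+t)^{2H} dt| ≤ C (1+i)^{2H-Q}. -/
open MeasureTheory Set

private lemma itder (H : ℝ) (c : ℝ) (hc : 1 ≤ c) (n : ℕ) :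
    ∀ y ∈ Set.Icc (0:ℝ) 1,
      iteratedDerivWithin n (fun t => (c + t) ^ (2*H)) (Set.Icc 0 1) y
        = (∏ j ∈ Finset.range n, (2*H - j)) * (c + y) ^ (2*H - n) := by
  induction n with
  | zero => intro y hy; simp
  | succ n ih =>
    intro y hy
    have hpos : ∀ z ∈ Set.Icc (0:ℝ) 1, 0 < c + z := fun z hz => by
      have := hz.1; linarith
    rw [iteratedDerivWithin_succ]
    rw [derivWithin_congr ih (ih y hy)]
    have h1 : HasDerivAt (fun z : ℝ => c + z) 1 y := by
      simpa using (hasDerivAt_id y).const_add c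
    have hd : HasDerivAt (fun z => (∏ j ∈ Finset.range n, (2*H - j)) * (c + z) ^ (2*H - n))
        ((∏ j ∈ Finset.range n, (2*H - j)) * (1 * (2*H - n) * (c + y) ^ (2*H - n - 1))) y :=
      (h1.rpow_const (Or.inl (hpos y hy).ne')).const_mul _
    rw [hd.hasDerivWithinAt.derivWithin (uniqueDiffOn_Icc zero_lt_one y hy)]
    rw [Finset.prod_range_succ]
    have hexp : 2*H - (n:ℝ) - 1 = 2*H - ((n+1 : ℕ) : ℝ) := by push_cast; ring
    rw [hexp]; ring

theorem stmt11 (H : ℝ) (hH : H ∈ Set.Ioo (0:ℝ) 1) (Q : ℕ) (hQ : 1 ≤ Q)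
    (ψ : ℝ → ℝ) (hψc : Continuous ψ) (hψs : Function.support ψ ⊆ Set.Icc 0 1)
    (hψd : ContDiffOn ℝ (Q : ℕ∞) ψ (Set.Icc 0 1))
    (hmom : ∀ p : ℕ, p < Q → ∫ t in (0:ℝ)..1, t ^ p * ψ t = 0) :
    ∃ C > 0, ∀ i : ℕ, 1 ≤ i →
      |∫ t in (0:ℝ)..1, ψ t * ((i:ℝ) + t) ^ (2*H)|
        ≤ C * (1 + (i:ℝ)) ^ (2*H - (Q:ℝ)) := by
  obtain ⟨n, rfl⟩ : ∃ n, Q = n + 1 := ⟨Q - 1, (Nat.succ_pred_eq_of_pos hQ).symm⟩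
  obtain ⟨M, hM⟩ := isCompact_Icc.exists_bound_of_continuousOn
    (hψc.continuousOn (s := Set.Icc (0:ℝ) 1))
  have hM0 : 0 ≤ M := le_trans (norm_nonneg (ψ 0)) (hM 0 ⟨le_rfl, zero_le_one⟩)
  set K : ℝ := |∏ j ∈ Finset.range (n+1), (2*H - j)| * 2^(n+1) with hK
  have hK0 : 0 ≤ K := by positivity
  refine ⟨M * K / (Nat.factorial n : ℝ) + 1, by positivity, ?_⟩
  intro i hi
  have hci : (1:ℝ) ≤ (i:ℝ) := by exact_mod_cast hi
  set e : ℝ := 2*H - ((n+1 : ℕ) : ℝ) with he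
  set s : Set ℝ := Set.Icc 0 1 with hs
  set f : ℝ → ℝ := fun t => ((i:ℝ) + t) ^ (2*H) with hf
  have hpos : ∀ z ∈ s, 0 < (i:ℝ) + z := fun z hz => by
    have := hz.1; linarith
  have hie : 0 < 1 + (i:ℝ) := by linarith
  have hrpos : 0 < (1 + (i:ℝ)) ^ e := Real.rpow_pos_of_pos hie e
  -- smoothness
  have hfd : ContDiffOn ℝ ((n:ℕ∞) + 1) f s := by
    intro x hx
    exact ((Real.contDiffAt_rpow_const_of_ne (hpos x hx).ne').comp x
      ((contDiff_const.add contDiff_id).contDiffAt)).contDiffWithinAt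
  -- bound on the (n+1)-st derivative
  have hkey : ∀ y ∈ s, ((i:ℝ) + y) ^ e ≤ 2^(n+1) * (1 + (i:ℝ)) ^ e := by
    intro y hy
    have h2n : (1:ℝ) ≤ 2^(n+1) := one_le_pow₀ one_le_two
    rcases le_or_gt 0 e with hce | hce
    · calc ((i:ℝ) + y) ^ e ≤ (1 + (i:ℝ)) ^ e :=
            Real.rpow_le_rpow (by linarith [hy.1]) (by linarith [hy.2]) hce
        _ ≤ 2^(n+1) * (1 + (i:ℝ)) ^ e := le_mul_of_one_le_left hrpos.le h2n
    · have h1 : ((i:ℝ) + y) ^ e ≤ ((1 + (i:ℝ))/2) ^ e :=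
        Real.rpow_le_rpow_of_nonpos (by linarith) (by linarith [hy.1]) hce.le
      have h2 : ((1 + (i:ℝ))/2) ^ e = (1 + (i:ℝ)) ^ e * ((2:ℝ) ^ e)⁻¹ := by
        rw [Real.div_rpow (by linarith) (by norm_num), div_eq_mul_inv]
      have h3 : ((2:ℝ) ^ e)⁻¹ = (2:ℝ) ^ (-e) := (Real.rpow_neg (by norm_num) e).symm
      have h4 : (2:ℝ) ^ (-e) ≤ (2:ℝ) ^ (((n+1:ℕ)):ℝ) := by
        apply Real.rpow_le_rpow_of_exponent_le one_le_two
        have := hH.1; rw [he]; push_cast; linarith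
      have h5 : (2:ℝ) ^ (((n+1:ℕ)):ℝ) = (2:ℝ)^(n+1) := by
        rw [Real.rpow_natCast]
      calc ((i:ℝ) + y) ^ e ≤ (1 + (i:ℝ)) ^ e * ((2:ℝ) ^ e)⁻¹ := h1.trans_eq h2
        _ ≤ (1 + (i:ℝ)) ^ e * 2^(n+1) := by
            rw [h3]; exact mul_le_mul_of_nonneg_left (h4.trans_eq h5) hrpos.le
        _ = 2^(n+1) * (1 + (i:ℝ)) ^ e := mul_comm _ _
  have hder : ∀ y ∈ s, ‖iteratedDerivWithin (n+1) f s y‖ ≤ K * (1 + (i:ℝ)) ^ e := by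
    intro y hy
    rw [itder H (i:ℝ) hci (n+1) y hy, Real.norm_eq_abs, abs_mul,
      abs_of_nonneg (Real.rpow_nonneg (hpos y hy).le _)]
    calc |∏ j ∈ Finset.range (n+1), (2*H - j)| * ((i:ℝ) + y) ^ e
        ≤ |∏ j ∈ Finset.range (n+1), (2*H - j)| * (2^(n+1) * (1 + (i:ℝ)) ^ e) :=
          mul_le_mul_of_nonneg_left (hkey y hy) (abs_nonneg _)
      _ = K * (1 + (i:ℝ)) ^ e := by rw [hK]; ring
  -- Taylor remainder bound
  have htay : ∀ t ∈ s, ‖f t - taylorWithinEval f n s 0 t‖ ≤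
      K * (1 + (i:ℝ)) ^ e * (t - 0)^(n+1) / (Nat.factorial n : ℝ) :=
    fun t ht => taylor_mean_remainder_bound zero_le_one hfd ht hder
  -- vanishing of the polynomial part
  have hPc : Continuous (fun t => taylorWithinEval f n s 0 t) := by
    simp_rw [taylor_within_apply]
    exact continuous_finset_sum _ fun k _ => (by fun_prop : Continuous fun t : ℝ =>
      ((Nat.factorial k : ℝ))⁻¹ * (t - 0)^k).smul continuous_const
  have hPint : ∫ t in (0:ℝ)..1, ψ t * taylorWithinEval f n s 0 t = 0 := by
    have hrw : ∀ t : ℝ, ψ t * taylorWithinEval f n s 0 t =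
        ∑ k ∈ Finset.range (n+1), (iteratedDerivWithin k f s 0 / (Nat.factorial k : ℝ)) * (t^k * ψ t) := by
      intro t
      rw [taylor_within_apply, Finset.mul_sum]
      refine Finset.sum_congr rfl fun k hk => ?_
      simp only [smul_eq_mul, sub_zero]; ring
    simp_rw [hrw]
    rw [intervalIntegral.integral_finset_sum]
    · refine Finset.sum_eq_zero fun k hk => ?_
      rw [intervalIntegral.integral_const_mul, hmom k (Finset.mem_range.mp hk), mul_zero]
    · intro k hk
      exact (Continuous.intervalIntegrable (by fun_prop) 0 1)
  -- integrability
  have hfc : ContinuousOn f (Set.uIcc (0:ℝ) 1) := by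
    rw [Set.uIcc_of_le zero_le_one]
    exact hfd.continuousOn
  have h1 : IntervalIntegrable (fun t => ψ t * f t) volume 0 1 :=
    ((hψc.continuousOn).mul hfc).intervalIntegrable
  have h2 : IntervalIntegrable (fun t => ψ t * taylorWithinEval f n s 0 t) volume 0 1 :=
    (hψc.mul hPc).intervalIntegrable 0 1
  have keyeq : (∫ t in (0:ℝ)..1, ψ t * f t) =
      ∫ t in (0:ℝ)..1, (ψ t * f t - ψ t * taylorWithinEval f n s 0 t) := by
    rw [intervalIntegral.integral_sub h1 h2, hPint, sub_zero]
  rw [show (∫ t in (0:ℝ)..1, ψ t * ((i:ℝ) + t) ^ (2*H)) = ∫ t in (0:ℝ)..1, ψ t * f t from rfl,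
    keyeq]
  have hbd : ∀ t ∈ Set.uIoc (0:ℝ) 1,
      ‖ψ t * f t - ψ t * taylorWithinEval f n s 0 t‖ ≤ M * (K * (1 + (i:ℝ)) ^ e) / (Nat.factorial n : ℝ) := by
    intro t ht
    rw [Set.uIoc_of_le zero_le_one] at ht
    have hts : t ∈ s := ⟨ht.1.le, ht.2⟩
    rw [← mul_sub, Real.norm_eq_abs, abs_mul]
    have hψb : |ψ t| ≤ M := hM t hts
    have hfb := htay t hts
    have htp : (t - 0)^(n+1) ≤ 1 := by
      rw [sub_zero]; exact pow_le_one₀ ht.1.le ht.2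
    have hKe : 0 ≤ K * (1 + (i:ℝ)) ^ e := mul_nonneg hK0 hrpos.le
    calc |ψ t| * |f t - taylorWithinEval f n s 0 t|
        ≤ M * (K * (1 + (i:ℝ)) ^ e * (t - 0)^(n+1) / (Nat.factorial n : ℝ)) :=
          mul_le_mul hψb hfb (abs_nonneg _) hM0
      _ ≤ M * (K * (1 + (i:ℝ)) ^ e * 1 / (Nat.factorial n : ℝ)) := by
          apply mul_le_mul_of_nonneg_left _ hM0
          apply div_le_div_of_nonneg_right ?_ ?_ |>.trans_eq rfl
          · exact mul_le_mul_of_nonneg_left htp hKe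
          · positivity
      _ = M * (K * (1 + (i:ℝ)) ^ e) / (Nat.factorial n : ℝ) := by ring
  have := intervalIntegral.norm_integral_le_of_norm_le_const hbd
  rw [Real.norm_eq_abs] at this
  calc |∫ t in (0:ℝ)..1, (ψ t * f t - ψ t * taylorWithinEval f n s 0 t)|
      ≤ M * (K * (1 + (i:ℝ)) ^ e) / (Nat.factorial n : ℝ) * |1 - 0| := this
    _ = (M * K / (Nat.factorial n : ℝ)) * (1 + (i:ℝ)) ^ e := by rw [abs_of_nonneg (by norm_num : (0:ℝ) ≤ 1 - 0)]; ring
    _ ≤ (M * K / (Nat.factorial n : ℝ) + 1) * (1 + (i:ℝ)) ^ e := by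
        apply mul_le_mul_of_nonneg_right (by linarith) hrpos.le
end
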